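/- arXiv:2101.07386 — 5 statements merged into one kernel-verified Lean document; each statement's English description precedes it below -/
import Mathlib

section
/- Let Ω₁ ⊆ ℂ be nonempty open and connected, Ω₂ ⊆ ℂ be open, and let φ : 𝒜(Ω₁) → 𝒜(Ω₂) be a ring isomorphism. Then there exists a bijection γ : Ω₁ → Ω₂ which is either conformal or anti-conformal, such that either φ(f) = f ∘ γ⁻¹ for all f ∈ 𝒜(Ω₁), or φ(f) = conj ∘ (f ∘ γ⁻¹) for all f ∈ 𝒜(Ω₁) (where conj denotes complex conjugation). -/
open Complex Filter
open scoped Classical Topology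
noncomputable section
set_option maxHeartbeats 1000000
set_option synthInstance.maxHeartbeats 1000000
section PRELUDE
def analyticAlg (Ω : Set ℂ) : Subalgebra ℂ (Ω → ℂ) where
  carrier := {f | ∃ F : ℂ → ℂ, DifferentiableOn ℂ F Ω ∧ ∀ z : Ω, F z = f z}
  add_mem' := by
    rintro f g ⟨F, hF, hFf⟩ ⟨G, hG, hGg⟩
    exact ⟨F + G, hF.add hG, fun z => by simp [hFf z, hGg z]⟩
  mul_mem' := by
    rintro f g ⟨F, hF, hFf⟩ ⟨G, hG, hGg⟩
    exact ⟨F * G, hF.mul hG, fun z => by simp [hFf z, hGg z]⟩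
  algebraMap_mem' := fun r => ⟨fun _ => r, differentiableOn_const r, fun _ => rfl⟩
end PRELUDE

/-- compatibility: the complex absolute value as the norm -/
def Complex.abs : AbsoluteValue ℂ ℝ := IsAbsoluteValue.toAbsoluteValue (‖·‖ : ℂ → ℝ)
theorem Complex.norm_eq_abs (z : ℂ) : ‖z‖ = Complex.abs z := rfl
theorem Complex.abs_ofReal (r : ℝ) : Complex.abs (r : ℂ) = |r| := Complex.norm_real r
theorem Complex.abs_le_abs_re_add_abs_im (z : ℂ) : Complex.abs z ≤ |z.re| + |z.im| :=
  Complex.norm_le_abs_re_add_abs_im z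

namespace Bers

variable {Ω : Set ℂ}

@[simp] lemma mul_eval (f g : ↥(analyticAlg Ω)) (z : Ω) : (f*g).1 z = f.1 z * g.1 z := rfl
@[simp] lemma add_eval (f g : ↥(analyticAlg Ω)) (z : Ω) : (f+g).1 z = f.1 z + g.1 z := rfl
@[simp] lemma sub_eval (f g : ↥(analyticAlg Ω)) (z : Ω) : (f-g).1 z = f.1 z - g.1 z := rfl
@[simp] lemma one_eval (z : Ω) : (1 : ↥(analyticAlg Ω)).1 z = 1 := rfl
@[simp] lemma zero_eval (z : Ω) : (0 : ↥(analyticAlg Ω)).1 z = 0 := rfl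
@[simp] lemma neg_eval (f : ↥(analyticAlg Ω)) (z : Ω) : (-f).1 z = -(f.1 z) := rfl

def cst (Ω : Set ℂ) : ℂ →+* ↥(analyticAlg Ω) := (algebraMap ℂ ↥(analyticAlg Ω) : ℂ →+* _)
@[simp] lemma cst_eval (c : ℂ) (z : Ω) : (cst Ω c).1 z = c := rfl
def idA (Ω : Set ℂ) : ↥(analyticAlg Ω) :=
  ⟨fun z => (z : ℂ), ⟨id, differentiable_id.differentiableOn, fun _ => rfl⟩⟩
@[simp] lemma idA_eval (z : Ω) : (idA Ω).1 z = (z : ℂ) := rfl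
def pA (Ω : Set ℂ) (a : ℂ) : ↥(analyticAlg Ω) := idA Ω - cst Ω a
@[simp] lemma pA_eval (a : ℂ) (z : Ω) : (pA Ω a).1 z = (z : ℂ) - a := rfl
lemma ext_eval {f g : ↥(analyticAlg Ω)} (h : ∀ z : Ω, f.1 z = g.1 z) : f = g :=
  Subtype.ext (funext h)

/-- generic separation lemma -/
lemma eq_const_of_two_values (hΩ : IsOpen Ω) (hpre : IsPreconnected Ω)
    (u : ↥(analyticAlg Ω)) (c₁ c₂ : ℂ) (hne : c₁ ≠ c₂)
    (hval : ∀ z : Ω, u.1 z = c₁ ∨ u.1 z = c₂) :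
    (∀ z : Ω, u.1 z = c₁) ∨ (∀ z : Ω, u.1 z = c₂) := by
  obtain ⟨U, hU, hUu⟩ := u.2
  have hcont : ContinuousOn U Ω := hU.continuousOn
  set r := dist c₁ c₂ with hr
  have hrpos : 0 < r := dist_pos.2 hne
  set S₁ : Set ℂ := Ω ∩ U ⁻¹' (Metric.ball c₁ (r/2)) with hS₁
  set S₂ : Set ℂ := Ω ∩ U ⁻¹' (Metric.ball c₂ (r/2)) with hS₂
  have hS₁o : IsOpen S₁ := hcont.isOpen_inter_preimage hΩ Metric.isOpen_ball
  have hS₂o : IsOpen S₂ := hcont.isOpen_inter_preimage hΩ Metric.isOpen_ball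
  have hdisj : Disjoint S₁ S₂ := by
    rw [Set.disjoint_left]
    rintro x ⟨-, h1⟩ ⟨-, h2⟩
    have := dist_triangle c₁ (U x) c₂
    rw [dist_comm c₁ (U x)] at this
    simp only [Set.mem_preimage, Metric.mem_ball] at h1 h2
    linarith
  have hcover : Ω ⊆ S₁ ∪ S₂ := by
    intro x hx
    rcases hval ⟨x, hx⟩ with h | h <;> [left; right] <;>
      exact ⟨hx, by simp [Set.mem_preimage, Metric.mem_ball, hUu ⟨x, hx⟩, h, hrpos,
        dist_self, dist_comm]⟩
  rcases hpre.subset_or_subset hS₁o hS₂o hdisj hcover with h | h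
  · left
    intro z
    rcases hval z with hv | hv
    · exact hv
    · exfalso
      obtain ⟨-, hball⟩ := h z.2
      simp only [Set.mem_preimage, Metric.mem_ball, hUu z, hv] at hball
      rw [dist_comm] at hball
      linarith
  · right
    intro z
    rcases hval z with hv | hv
    · exfalso
      obtain ⟨-, hball⟩ := h z.2
      simp only [Set.mem_preimage, Metric.mem_ball, hUu z, hv] at hball
      linarith
    · exact hv


lemma sq_eq_negone {x : ℂ} (hx : x * x = -1) : x = I ∨ x = -I := by
  have h : (x - I) * (x + I) = 0 := by linear_combination hx - Complex.I_mul_I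
  rcases mul_eq_zero.1 h with h | h
  · exact Or.inl (sub_eq_zero.1 h)
  · exact Or.inr (eq_neg_of_add_eq_zero_left h)

lemma isUnit_iff {f : ↥(analyticAlg Ω)} : IsUnit f ↔ ∀ z : Ω, f.1 z ≠ 0 := by
  constructor
  · intro hf z hz
    obtain ⟨g, hg⟩ := hf.exists_right_inv
    have : (f * g).1 z = 1 := by rw [hg]; rfl
    rw [mul_eval, hz, zero_mul] at this
    exact zero_ne_one this
  · intro h
    obtain ⟨F, hF, hFf⟩ := f.2
    have hF0 : ∀ z : Ω, F z ≠ 0 := fun z => by rw [hFf z]; exact h z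
    have hmem : (fun z : Ω => (f.1 z)⁻¹) ∈ analyticAlg Ω := by
      refine ⟨fun z => (F z)⁻¹, ?_, fun z => congrArg (·⁻¹) (hFf z)⟩
      intro z hz
      exact (hF z hz).inv (hF0 ⟨z, hz⟩)
    refine IsUnit.of_mul_eq_one (a := f) ⟨_, hmem⟩ (ext_eval fun z => ?_)
    rw [mul_eval, one_eval]
    exact mul_inv_cancel₀ (h z)

lemma factor (hΩ : IsOpen Ω) (a : Ω) (f : ↥(analyticAlg Ω)) (hf : f.1 a = 0) :
    ∃ g : ↥(analyticAlg Ω), f = pA Ω a * g := by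
  obtain ⟨F, hF, hFf⟩ := f.2
  have hFa : F a = 0 := by rw [hFf a, hf]
  have hmem : (fun z : Ω => dslope F (a : ℂ) (z : ℂ)) ∈ analyticAlg Ω :=
    ⟨dslope F (a : ℂ), (Complex.differentiableOn_dslope (hΩ.mem_nhds a.2)).2 hF, fun _ => rfl⟩
  refine ⟨⟨_, hmem⟩, ext_eval fun z => ?_⟩
  have h1 := sub_smul_dslope F (a : ℂ) (z : ℂ)
  rw [hFa, sub_zero] at h1
  rw [mul_eval, pA_eval]
  have h2 : f.1 z = F z := (hFf z).symm
  rw [h2, ← h1]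
  simp [smul_eq_mul]

lemma pA_dvd_iff (hΩ : IsOpen Ω) (a : Ω) (f : ↥(analyticAlg Ω)) :
    pA Ω (a : ℂ) ∣ f ↔ f.1 a = 0 := by
  constructor
  · rintro ⟨g, rfl⟩
    rw [mul_eval, pA_eval]; simp
  · intro hf
    obtain ⟨g, hg⟩ := factor hΩ a f hf
    exact ⟨g, hg⟩

def MaxPrin {R : Type*} [CommRing R] (u : R) : Prop :=
  ¬IsUnit u ∧ ∀ f : R, u ∣ f ∨ ∃ a b : R, a * f + b * u = 1

lemma maxPrin_map {R S : Type*} [CommRing R] [CommRing S] (e : R ≃+* S) {u : R}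
    (hu : MaxPrin u) : MaxPrin (e u) := by
  obtain ⟨h1, h2⟩ := hu
  constructor
  · intro h
    exact h1 (by simpa using h.map e.symm.toRingHom)
  · intro f
    rcases h2 (e.symm f) with ⟨g, hg⟩ | ⟨a, b, hab⟩
    · left
      refine ⟨e g, ?_⟩
      have := congrArg e hg
      simpa using this
    · right
      refine ⟨e a, e b, ?_⟩
      have := congrArg e hab
      simpa using this

lemma maxPrin_pA (hΩ : IsOpen Ω) (a : Ω) : MaxPrin (pA Ω (a : ℂ)) := by
  constructor
  · rw [isUnit_iff]
    push_neg
    exact ⟨a, by simp⟩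
  · intro f
    by_cases hf : f.1 a = 0
    · exact Or.inl ((pA_dvd_iff hΩ a f).2 hf)
    · right
      obtain ⟨g, hg⟩ := factor hΩ a (f - cst Ω (f.1 a)) (by simp)
      refine ⟨cst Ω (f.1 a)⁻¹, -(cst Ω (f.1 a)⁻¹) * g, ?_⟩
      have h2 : f = pA Ω (a:ℂ) * g + cst Ω (f.1 a) := by
        rw [← hg]; ring
      rw [h2]
      apply ext_eval
      intro z
      simp only [add_eval, mul_eval, one_eval, neg_eval, cst_eval]
      simp only [pA_eval, sub_self, zero_mul, add_zero]
      field_simp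
      rw [div_eq_one_iff_eq (by simpa using hf)]; ring

lemma maxPrin_zero {u : ↥(analyticAlg Ω)} (hu : MaxPrin u) :
    ∃ z : Ω, ∀ f : ↥(analyticAlg Ω), u ∣ f ↔ f.1 z = 0 := by
  obtain ⟨h1, h2⟩ := hu
  have hz : ¬ (∀ z : Ω, u.1 z ≠ 0) := fun h => h1 (isUnit_iff.2 h)
  push_neg at hz
  obtain ⟨z, hz⟩ := hz
  refine ⟨z, fun f => ⟨?_, ?_⟩⟩
  · rintro ⟨g, rfl⟩
    rw [mul_eval, hz, zero_mul]
  · intro hf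
    rcases h2 f with h | ⟨a, b, hab⟩
    · exact h
    · exfalso
      have := congrArg (fun g : ↥(analyticAlg Ω) => g.1 z) hab
      simp only [add_eval, mul_eval, one_eval, hf, hz, mul_zero, add_zero] at this
      exact zero_ne_one this

section Transfer

variable {Ω₁ Ω₂ : Set ℂ} (φ : ↥(analyticAlg Ω₁) ≃+* ↥(analyticAlg Ω₂))

/-- the point map induced by an isomorphism -/
def dmap (hΩ₂ : IsOpen Ω₂) (w : Ω₂) : Ω₁ :=
  Classical.choose (maxPrin_zero (maxPrin_map φ.symm (maxPrin_pA hΩ₂ w)))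

lemma dmap_spec (hΩ₂ : IsOpen Ω₂) (w : Ω₂) (f : ↥(analyticAlg Ω₁)) :
    φ.symm (pA Ω₂ (w : ℂ)) ∣ f ↔ f.1 (dmap φ hΩ₂ w) = 0 :=
  Classical.choose_spec (maxPrin_zero (maxPrin_map φ.symm (maxPrin_pA hΩ₂ w))) f

/-- KEY vanishing correspondence -/
lemma key (hΩ₂ : IsOpen Ω₂) (w : Ω₂) (f : ↥(analyticAlg Ω₁)) :
    (φ f).1 w = 0 ↔ f.1 (dmap φ hΩ₂ w) = 0 := by
  rw [← dmap_spec φ hΩ₂ w f, ← pA_dvd_iff hΩ₂ w (φ f)]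
  constructor
  · rintro ⟨g, hg⟩
    refine ⟨φ.symm g, ?_⟩
    have := congrArg φ.symm hg
    simpa using this
  · rintro ⟨g, hg⟩
    have := congrArg φ hg
    simp only [RingEquiv.apply_symm_apply, map_mul] at this
    exact ⟨φ g, this⟩

/-- evaluation formula with the (a priori point-dependent) character -/
lemma eval_formula (hΩ₂ : IsOpen Ω₂) (w : Ω₂) (f : ↥(analyticAlg Ω₁)) :
    (φ f).1 w = (φ (cst Ω₁ (f.1 (dmap φ hΩ₂ w)))).1 w := by
  have h0 : (f - cst Ω₁ (f.1 (dmap φ hΩ₂ w))).1 (dmap φ hΩ₂ w) = 0 := by simp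
  have := (key φ hΩ₂ w _).2 h0
  rw [map_sub] at this
  rw [sub_eval] at this
  exact sub_eq_zero.1 this
  
/-- `φ` fixes rational constants -/
lemma cst_ratCast (q : ℚ) : φ (cst Ω₁ (q : ℂ)) = cst Ω₂ (q : ℂ) := by
  have hden : ((q.den : ℂ)) ≠ 0 := by
    exact_mod_cast (Nat.cast_ne_zero (R := ℂ)).2 q.den_nz
  have hq : (q : ℂ) * (q.den : ℂ) = (q.num : ℂ) := by
    rw [Rat.cast_def, div_mul_cancel₀ _ hden]
  have h1 : cst Ω₁ (q : ℂ) * ((q.den : ℕ) : ↥(analyticAlg Ω₁)) =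
      ((q.num : ℤ) : ↥(analyticAlg Ω₁)) := by
    apply ext_eval
    intro z
    have e1 : (((q.den : ℕ) : ↥(analyticAlg Ω₁))).1 z = (q.den : ℂ) := by
      norm_cast
    have e2 : (((q.num : ℤ) : ↥(analyticAlg Ω₁))).1 z = (q.num : ℂ) := by
      norm_cast
    rw [mul_eval, e1, e2, cst_eval, hq]
  have h2 := congrArg φ h1
  rw [map_mul, map_natCast, map_intCast] at h2
  apply ext_eval
  intro w
  have := congrArg (fun g : ↥(analyticAlg Ω₂) => g.1 w) h2
  simp only [mul_eval] at this
  have e1 : (((q.den : ℕ) : ↥(analyticAlg Ω₂))).1 w = (q.den : ℂ) := by norm_cast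
  have e2 : (((q.num : ℤ) : ↥(analyticAlg Ω₂))).1 w = (q.num : ℂ) := by norm_cast
  rw [e1, e2] at this
  rw [cst_eval]
  have hval : (φ (cst Ω₁ (q:ℂ))).1 w = (q.num:ℂ)/(q.den:ℂ) := by
    rw [eq_div_iff hden]; exact this
  rw [hval, Rat.cast_def]

/-- the image of the constant `I` -/
lemma jA_sq : (φ (cst Ω₁ I)) * (φ (cst Ω₁ I)) = -1 := by
  rw [← map_mul, ← map_mul, Complex.I_mul_I, map_neg, map_one, map_neg, map_one]

lemma I_ne_negI : (I : ℂ) ≠ -I := by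
  intro h
  have := congrArg Complex.im h
  simp at this
  norm_num at this

lemma jA_const (hΩ₂ : IsOpen Ω₂) (pre₂ : IsPreconnected Ω₂) :
    (∀ w : Ω₂, (φ (cst Ω₁ I)).1 w = I) ∨ (∀ w : Ω₂, (φ (cst Ω₁ I)).1 w = -I) := by
  apply eq_const_of_two_values hΩ₂ pre₂ _ I (-I) I_ne_negI
  intro w
  apply sq_eq_negone
  have := congrArg (fun g : ↥(analyticAlg Ω₂) => g.1 w) (jA_sq φ)
  simpa using this

/-- Gaussian rationals -/
def Gauss (x : ℂ) : Prop := ∃ a b : ℚ, x = (a : ℂ) + (b : ℂ) * I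

lemma gauss_dense (x : ℂ) {ε : ℝ} (hε : 0 < ε) :
    ∃ t : ℂ, Gauss t ∧ Complex.abs (x - t) < ε := by
  obtain ⟨a, ha⟩ := exists_rat_near x.re (by linarith : (0:ℝ) < ε/2)
  obtain ⟨b, hb⟩ := exists_rat_near x.im (by linarith : (0:ℝ) < ε/2)
  refine ⟨(a : ℂ) + (b : ℂ) * I, ⟨a, b, rfl⟩, ?_⟩
  have h1 : (x - ((a : ℂ) + (b : ℂ) * I)).re = x.re - a := by simp
  have h2 : (x - ((a : ℂ) + (b : ℂ) * I)).im = x.im - b := by simp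
  calc Complex.abs (x - ((a : ℂ) + (b : ℂ) * I)) ≤ |(x - ((a:ℂ) + (b:ℂ)*I)).re| + |(x - ((a:ℂ)+(b:ℂ)*I)).im| := Complex.abs_le_abs_re_add_abs_im _
  _ < ε := by rw [h1, h2]; push_cast at ha hb ⊢; linarith [abs_nonneg (x.re - (a:ℝ)), abs_nonneg (x.im - (b:ℝ))]

/-- constancy for gaussian constants -/
lemma cst_gauss_const (hΩ₂ : IsOpen Ω₂) (pre₂ : IsPreconnected Ω₂) {c : ℂ} (hc : Gauss c)
    (w w' : Ω₂) : (φ (cst Ω₁ c)).1 w = (φ (cst Ω₁ c)).1 w' := by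
  obtain ⟨a, b, rfl⟩ := hc
  have hsplit : cst Ω₁ ((a:ℂ) + (b:ℂ)*I) = cst Ω₁ (a:ℂ) + cst Ω₁ (b:ℂ) * cst Ω₁ I := by
    rw [← map_mul, ← map_add]
  rw [hsplit, map_add, map_mul, cst_ratCast φ a, cst_ratCast φ b]
  have hwv := jA_const φ hΩ₂ pre₂
  rcases hwv with h | h <;>
    simp [add_eval, mul_eval, cst_eval, h w, h w']

/-- every image of a constant is a constant function -/
theorem cst_const (hΩ₁ : IsOpen Ω₁) (hΩ₂ : IsOpen Ω₂)
    (pre₁ : IsPreconnected Ω₁) (pre₂ : IsPreconnected Ω₂) (c : ℂ) (w w' : Ω₂) :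
    (φ (cst Ω₁ c)).1 w = (φ (cst Ω₁ c)).1 w' := by
  by_contra hne
  set k := φ (cst Ω₁ c) with hk
  obtain ⟨K, hK, hKk⟩ := k.2
  by_cases hA : ∀ v : Ω₂, ∀ᶠ y in nhds (v : ℂ), K y = K (v : ℂ)
  · -- locally constant case
    set T₁ : Set ℂ := {x | x ∈ Ω₂ ∧ K x = K (w : ℂ)} with hT₁
    set T₂ : Set ℂ := {x | x ∈ Ω₂ ∧ K x ≠ K (w : ℂ)} with hT₂
    have hT₁o : IsOpen T₁ := by
      rw [isOpen_iff_mem_nhds]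
      rintro x ⟨hx1, hx2⟩
      filter_upwards [hΩ₂.mem_nhds hx1, hA ⟨x, hx1⟩] with y hy1 hy2
      exact ⟨hy1, by rw [hy2, hx2]⟩
    have hT₂o : IsOpen T₂ := by
      rw [isOpen_iff_mem_nhds]
      rintro x ⟨hx1, hx2⟩
      filter_upwards [hΩ₂.mem_nhds hx1, hA ⟨x, hx1⟩] with y hy1 hy2
      exact ⟨hy1, by rw [hy2]; exact hx2⟩
    have hdisj : Disjoint T₁ T₂ := by
      rw [Set.disjoint_left]
      rintro x ⟨-, h1⟩ ⟨-, h2⟩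
      exact h2 h1
    have hcover : Ω₂ ⊆ T₁ ∪ T₂ := fun x hx => by
      by_cases h : K x = K (w : ℂ)
      · exact Or.inl ⟨hx, h⟩
      · exact Or.inr ⟨hx, h⟩
    rcases pre₂.subset_or_subset hT₁o hT₂o hdisj hcover with h | h
    · obtain ⟨-, hw'⟩ := h w'.2
      apply hne
      rw [← hKk w, ← hKk w', hw']
    · obtain ⟨-, hw⟩ := h w.2
      exact hw rfl
  · push_neg at hA
    obtain ⟨v, hv⟩ := hA
    have hAn : AnalyticAt ℂ K (v : ℂ) := hK.analyticAt (hΩ₂.mem_nhds v.2)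
    have hle : nhds (K (v : ℂ)) ≤ Filter.map K (nhds (v : ℂ)) :=
      hAn.eventually_constant_or_nhds_le_map_nhds.resolve_left (Filter.not_eventually.2 hv)
    obtain ⟨ρ, hρpos, hball⟩ := Metric.isOpen_iff.1 hΩ₂ (v : ℂ) v.2
    have himg : K '' Metric.ball (v : ℂ) ρ ∈ nhds (K (v : ℂ)) :=
      hle (Filter.image_mem_map (Metric.ball_mem_nhds _ hρpos))
    obtain ⟨ε, hε, hsub⟩ := Metric.mem_nhds_iff.1 himg
    obtain ⟨t, htG, htδ⟩ := gauss_dense (K (v : ℂ)) hε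
    have htmem : t ∈ Metric.ball (K (v : ℂ)) ε := by
      rw [Metric.mem_ball, Complex.dist_eq, ← norm_neg, neg_sub]
      exact htδ
    obtain ⟨x, hx, hKx⟩ := hsub htmem
    set v' : Ω₂ := ⟨x, hball hx⟩ with hv'
    have hkv' : k.1 v' = t := by rw [← hKk v', hKx]
    -- transfer back
    have h0 : (φ (cst Ω₁ c - φ.symm (cst Ω₂ t))).1 v' = 0 := by
      rw [map_sub, RingEquiv.apply_symm_apply, sub_eval, ← hk, hkv', cst_eval, sub_self]
    have h1 := (key φ hΩ₂ v' _).1 h0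
    rw [sub_eval, cst_eval] at h1
    -- compute the value of φ.symm (cst Ω₂ t)
    obtain ⟨a, b, rfl⟩ := htG
    have hsplit : cst Ω₂ ((a:ℂ) + (b:ℂ)*I) = cst Ω₂ (a:ℂ) + cst Ω₂ (b:ℂ) * cst Ω₂ I := by
      rw [← map_mul, ← map_add]
    rw [hsplit, map_add, map_mul, cst_ratCast φ.symm a, cst_ratCast φ.symm b] at h1
    have hgc : Gauss c := by
      rcases jA_const φ.symm hΩ₁ pre₁ with h | h
      · refine ⟨a, b, ?_⟩
        have := h (dmap φ hΩ₂ v')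
        simp only [add_eval, mul_eval, cst_eval, this] at h1
        exact sub_eq_zero.1 h1
      · refine ⟨a, -b, ?_⟩
        have := h (dmap φ hΩ₂ v')
        simp only [add_eval, mul_eval, cst_eval, this] at h1
        have := sub_eq_zero.1 h1
        rw [this]; push_cast; ring
    exact hne (cst_gauss_const φ hΩ₂ pre₂ hgc w w')

lemma target_nonempty (ψ : ↥(analyticAlg Ω₁) ≃+* ↥(analyticAlg Ω₂)) (hne₁ : Ω₁.Nonempty) : Ω₂.Nonempty := by
  by_contra h
  rw [Set.not_nonempty_iff_eq_empty] at h
  have h01 : (0 : ↥(analyticAlg Ω₂)) = 1 := by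
    apply ext_eval
    rintro ⟨z, hz⟩
    rw [h] at hz
    exact absurd hz (Set.notMem_empty z)
  have := congrArg ψ.symm h01
  rw [map_zero, map_one] at this
  obtain ⟨z₀, hz₀⟩ := hne₁
  have := congrArg (fun g : ↥(analyticAlg Ω₁) => g.1 ⟨z₀, hz₀⟩) this
  simp only [zero_eval, one_eval] at this
  exact zero_ne_one this

lemma target_preconnected (ψ : ↥(analyticAlg Ω₁) ≃+* ↥(analyticAlg Ω₂))
    (hΩ₁ : IsOpen Ω₁) (pre₁ : IsPreconnected Ω₁) :
    IsPreconnected Ω₂ := by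
  by_contra hnc
  unfold IsPreconnected at hnc
  push_neg at hnc
  obtain ⟨u, v, hu, hv, hcover, hune, hvne, hempty⟩ := hnc
  have hdisj : ∀ x, x ∈ Ω₂ → x ∈ u → x ∈ v → False := by
    intro x h1 h2 h3
    have : x ∈ Ω₂ ∩ (u ∩ v) := ⟨h1, h2, h3⟩
    rw [hempty] at this
    exact this
  -- the idempotent indicator
  have hmem : (fun w : Ω₂ => if (w : ℂ) ∈ u then (1:ℂ) else 0) ∈ analyticAlg Ω₂ := by
    refine ⟨fun x => if x ∈ u then (1:ℂ) else 0, ?_, fun _ => rfl⟩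
    intro x hx
    by_cases hxu : x ∈ u
    · have hev : (fun x => if x ∈ u then (1:ℂ) else 0) =ᶠ[nhds x] fun _ => (1:ℂ) :=
        Filter.eventuallyEq_of_mem (hu.mem_nhds hxu) (fun y hy => if_pos hy)
      exact (hev.differentiableAt_iff.2 (differentiableAt_const 1)).differentiableWithinAt
    · have hxv : x ∈ v := (hcover hx).resolve_left hxu
      have hsub : Ω₂ ∩ v ∈ nhdsWithin x Ω₂ :=
        Filter.inter_mem self_mem_nhdsWithin (mem_nhdsWithin_of_mem_nhds (hv.mem_nhds hxv))
      have hev : (fun x => if x ∈ u then (1:ℂ) else 0) =ᶠ[nhdsWithin x Ω₂] fun _ => (0:ℂ) := by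
        apply Filter.eventuallyEq_of_mem hsub
        rintro y ⟨hy1, hy2⟩
        by_cases hyu : y ∈ u
        · exact absurd (hdisj y hy1 hyu hy2) id
        · exact if_neg hyu
      exact (differentiableWithinAt_const (0:ℂ)).congr_of_eventuallyEq hev (if_neg hxu)
  set e : ↥(analyticAlg Ω₂) := ⟨_, hmem⟩ with he
  have hee : e * e = e := by
    apply ext_eval
    intro z
    rw [mul_eval]
    show (if (z:ℂ) ∈ u then (1:ℂ) else 0) * (if (z:ℂ) ∈ u then (1:ℂ) else 0) =
      (if (z:ℂ) ∈ u then (1:ℂ) else 0)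
    split_ifs <;> norm_num
  set e' := ψ.symm e with he'
  have hee' : e' * e' = e' := by
    rw [he', ← map_mul, hee]
  have hval : ∀ z : Ω₁, e'.1 z = 0 ∨ e'.1 z = 1 := by
    intro z
    have := congrArg (fun g : ↥(analyticAlg Ω₁) => g.1 z) hee'
    simp only [mul_eval] at this
    have hz : e'.1 z * (e'.1 z - 1) = 0 := by linear_combination this
    rcases mul_eq_zero.1 hz with h | h
    · exact Or.inl h
    · exact Or.inr (by linear_combination h)
  rcases eq_const_of_two_values hΩ₁ pre₁ e' 0 1 (by norm_num) hval with h | h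
  · have h0 : e' = 0 := ext_eval fun z => by rw [h z, zero_eval]
    have he0 : e = 0 := by
      have := congrArg ψ h0
      rwa [he', RingEquiv.apply_symm_apply, map_zero] at this
    obtain ⟨x, hx1, hx2⟩ := hune
    have hx := congrArg (fun g : ↥(analyticAlg Ω₂) => g.1 ⟨x, hx1⟩) he0
    simp only [zero_eval] at hx
    change (if x ∈ u then (1:ℂ) else 0) = 0 at hx
    rw [if_pos hx2] at hx
    exact one_ne_zero hx
  · have h1 : e' = 1 := ext_eval fun z => by rw [h z, one_eval]
    have he1 : e = 1 := by
      have := congrArg ψ h1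
      rwa [he', RingEquiv.apply_symm_apply, map_one] at this
    obtain ⟨x, hx1, hx2⟩ := hvne
    have hx := congrArg (fun g : ↥(analyticAlg Ω₂) => g.1 ⟨x, hx1⟩) he1
    simp only [one_eval] at hx
    have hxu : x ∉ u := fun hxu => hdisj x hx1 hxu hx2
    change (if x ∈ u then (1:ℂ) else 0) = 1 at hx
    rw [if_neg hxu] at hx
    exact zero_ne_one hx

end Transfer

def evalRH (Ω : Set ℂ) (z : Ω) : ↥(analyticAlg Ω) →+* ℂ where
  toFun f := f.1 z
  map_one' := rfl
  map_mul' _ _ := rfl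
  map_zero' := rfl
  map_add' _ _ := rfl

@[simp] lemma evalRH_apply (z : Ω) (f : ↥(analyticAlg Ω)) : evalRH Ω z f = f.1 z := rfl

lemma gauss_rat (q : ℚ) : Gauss (q : ℂ) := ⟨q, 0, by push_cast; ring⟩
lemma gauss_add {x y : ℂ} (hx : Gauss x) (hy : Gauss y) : Gauss (x + y) := by
  obtain ⟨a, b, rfl⟩ := hx; obtain ⟨a', b', rfl⟩ := hy
  exact ⟨a + a', b + b', by push_cast; ring⟩
lemma gauss_mul {x y : ℂ} (hx : Gauss x) (hy : Gauss y) : Gauss (x * y) := by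
  obtain ⟨a, b, rfl⟩ := hx; obtain ⟨a', b', rfl⟩ := hy
  refine ⟨a*a' - b*b', a*b' + a'*b, by push_cast; linear_combination (b:ℂ)*b'*Complex.I_sq⟩
lemma gauss_zero : Gauss 0 := ⟨0, 0, by simp⟩
lemma gauss_one : Gauss 1 := ⟨1, 0, by simp⟩

/-- Newton interpolation: an entire function with prescribed value at `z₀` and Gaussian
rational values along a rational sequence accumulating at `z₀`. -/
theorem newton (z₀ : ℂ) {r : ℝ} (hr : 0 < r) (c : ℂ) :
    ∃ (F : ℂ → ℂ) (q : ℕ → ℚ),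
      Differentiable ℂ F ∧
      (∀ n, 0 < (q n : ℝ) ∧ (q n : ℝ) < r) ∧
      Tendsto (fun n => ((q n : ℂ) : ℂ)) atTop (nhds 0) ∧
      F z₀ = c ∧
      (∀ n, Gauss (F (z₀ + (q n : ℂ)))) := by
  classical
  set s : ℝ := min r 1 with hs
  have hs0 : 0 < s := lt_min hr one_pos
  have hs1 : s ≤ 1 := min_le_right _ _
  have hsr : s ≤ r := min_le_left _ _
  -- the rational sequence
  have hq : ∀ n : ℕ, ∃ q : ℚ, s/2^(n+2) < (q:ℝ) ∧ (q:ℝ) < s/2^(n+1) := by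
    intro n
    obtain ⟨q, h1, h2⟩ := exists_rat_btwn (by
      apply div_lt_div_of_pos_left hs0 (by positivity)
      exact pow_lt_pow_right₀ one_lt_two (by omega) : s/2^(n+2) < s/2^(n+1))
    exact ⟨q, h1, h2⟩
  choose q hq1 hq2 using hq
  have hqpos : ∀ n, 0 < (q n : ℝ) := fun n => lt_trans (by positivity) (hq1 n)
  have hqlt1 : ∀ n, (q n : ℝ) ≤ 1 := by
    intro n
    have := hq2 n
    have h2 : s/2^(n+1) ≤ 1 := by
      apply div_le_one_of_le₀ _ (by positivity)
      calc s ≤ 1 := hs1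
      _ ≤ 2^(n+1) := one_le_pow₀ (by norm_num)
    linarith
  have hqr : ∀ n, (q n : ℝ) < r := by
    intro n
    have := hq2 n
    have h2 : s/2^(n+1) ≤ s := by
      apply div_le_self (le_of_lt hs0)
      exact one_le_pow₀ (by norm_num)
    linarith
  set x : ℕ → ℂ := fun n => z₀ + (q n : ℂ) with hx
  set W : ℕ → ℂ → ℂ := fun n z => ∏ k ∈ Finset.range n, (z - x k) with hW
  set v : ℕ → ℂ := fun n => W n z₀ with hv
  have hvabs : ∀ n, Complex.abs (v n) = ∏ k ∈ Finset.range n, (q k : ℝ) := by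
    intro n
    rw [hv, hW]
    simp only [map_prod]
    apply Finset.prod_congr rfl
    intro k _
    rw [hx]
    simp only [sub_add_cancel_left, AbsoluteValue.map_neg]
    rw [show ((q k : ℚ) : ℂ) = (((q k : ℝ)) : ℂ) by push_cast; ring, Complex.abs_ofReal,
      abs_of_pos (hqpos k)]
  have hvpos : ∀ n, 0 < Complex.abs (v n) := by
    intro n
    rw [hvabs]
    exact Finset.prod_pos fun k _ => hqpos k
  have hvne : ∀ n, v n ≠ 0 := fun n => by
    intro h
    exact absurd (by rw [h]; simp : Complex.abs (v n) = 0) (ne_of_gt (hvpos n))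
  have hvsucc : ∀ n, Complex.abs (v (n+1)) = Complex.abs (v n) * (q n : ℝ) := by
    intro n
    rw [hvabs, hvabs, Finset.prod_range_succ]
  have hvle : ∀ n, Complex.abs (v (n+1)) ≤ Complex.abs (v n) := by
    intro n
    rw [hvsucc]
    nth_rewrite 2 [← mul_one (Complex.abs (v n))]
    exact mul_le_mul_of_nonneg_left (hqlt1 n) (le_of_lt (hvpos n))
  have hvle1 : ∀ n, Complex.abs (v n) ≤ 1 := by
    intro n
    rw [hvabs]
    apply Finset.prod_le_one (fun k _ => le_of_lt (hqpos k)) (fun k _ => hqlt1 k)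
  set e : ℕ → ℝ := fun n => ((n.factorial : ℝ))⁻¹ with he
  have hepos : ∀ n, 0 < e n := fun n => by positivity
  have hemono : ∀ n, e (n+1) ≤ e n := by
    intro n
    apply inv_anti₀ (by positivity)
    exact_mod_cast Nat.factorial_le (Nat.le_succ n)
  set ε : ℕ → ℝ := fun n => Complex.abs (v (n+1)) * e (n+1) with hε
  have hεpos : ∀ n, 0 < ε n := fun n => mul_pos (hvpos _) (hepos _)
  -- the coefficients
  have hgex : ∀ (n : ℕ) (p : ℂ), ∃ t, Gauss t ∧
      Complex.abs ((c - p)/(v n) - t) < ε n / Complex.abs (v n) :=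
    fun n p => gauss_dense _ (div_pos (hεpos n) (hvpos n))
  choose g hg1 hg2 using hgex
  set P : ℕ → ℂ := fun n => Nat.rec (0:ℂ) (fun m p => p + (g m p) * v m) n with hP
  set a : ℕ → ℂ := fun n => g n (P n) with ha
  have hPsucc : ∀ n, P (n+1) = P n + a n * v n := fun n => rfl
  have haG : ∀ n, Gauss (a n) := fun n => hg1 n (P n)
  have hPc : ∀ n, Complex.abs (c - P (n+1)) ≤ ε n := by
    intro n
    rw [hPsucc]
    have h1 : c - (P n + a n * v n) = ((c - P n)/(v n) - a n) * v n := by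
      field_simp [hvne n]
      ring
    rw [h1, map_mul]
    calc Complex.abs ((c - P n)/(v n) - a n) * Complex.abs (v n)
        ≤ (ε n / Complex.abs (v n)) * Complex.abs (v n) := by
          apply mul_le_mul_of_nonneg_right (le_of_lt (hg2 n (P n))) (le_of_lt (hvpos n))
      _ = ε n := div_mul_cancel₀ _ (ne_of_gt (hvpos n))
  have haB : ∀ n, Complex.abs (a n) ≤ Complex.abs (c - P n)/Complex.abs (v n)
      + ε n / Complex.abs (v n) := by
    intro n
    have h1 : Complex.abs (a n) ≤ Complex.abs ((c - P n)/v n)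
        + Complex.abs ((c - P n)/(v n) - a n) := by
      have h2 := Complex.abs.sub_le ((c - P n)/v n) 0 ((c - P n)/(v n) - a n)
      simp only [sub_zero, zero_sub, AbsoluteValue.map_neg, sub_sub_cancel] at h2
      exact h2
    rw [map_div₀] at h1
    exact le_trans h1 (by
      have := le_of_lt (hg2 n (P n))
      gcongr)
  have habound : ∀ n, Complex.abs (a n) ≤ (Complex.abs c + 2) * e n := by
    intro n
    match n with
    | 0 =>
      have h0 : P 0 = 0 := rfl
      have hv0 : Complex.abs (v 0) = 1 := by rw [hvabs]; simp
      have := haB 0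
      rw [h0, hv0, sub_zero, div_one, div_one] at this
      have hε0 : ε 0 ≤ 1 := by
        rw [hε]
        calc Complex.abs (v 1) * e 1 ≤ 1 * 1 := by
              apply mul_le_mul (hvle1 1) _ (le_of_lt (hepos 1)) zero_le_one
              rw [he]; norm_num
        _ = 1 := by norm_num
      have he0 : e 0 = 1 := by rw [he]; norm_num
      rw [he0, mul_one]
      linarith
    | Nat.succ m =>
      have h1 : Complex.abs (c - P (m+1)) ≤ ε m := hPc m
      have := haB (m+1)
      have ht1 : Complex.abs (c - P (m+1))/Complex.abs (v (m+1)) ≤ e (m+1) := by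
        rw [div_le_iff₀ (hvpos (m+1))]
        calc Complex.abs (c - P (m+1)) ≤ ε m := h1
        _ = Complex.abs (v (m+1)) * e (m+1) := rfl
        _ = e (m+1) * Complex.abs (v (m+1)) := by ring
      have ht2 : ε (m+1) / Complex.abs (v (m+1)) ≤ e (m+1) := by
        rw [hε, div_le_iff₀ (hvpos (m+1))]
        calc Complex.abs (v (m+2)) * e (m+2)
            ≤ Complex.abs (v (m+1)) * e (m+1) := by
              apply mul_le_mul (hvle (m+1)) (hemono (m+1)) (le_of_lt (hepos _)) (le_of_lt (hvpos _))
        _ = e (m+1) * Complex.abs (v (m+1)) := by ring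
      calc Complex.abs (a (m+1)) ≤ _ := this
      _ ≤ e (m+1) + e (m+1) := add_le_add ht1 ht2
      _ ≤ (Complex.abs c + 2) * e (m+1) := by
          have := hepos (m+1)
          nlinarith [Complex.abs.nonneg c]
  -- differentiability of the products
  have hWdiff : ∀ n, Differentiable ℂ (W n) := by
    intro n
    induction n with
    | zero =>
      have : W 0 = fun _ => (1:ℂ) := by
        funext z; rw [hW]; simp
      rw [this]; exact differentiable_const 1
    | succ m ih =>
      have : W (m+1) = fun z => W m z * (z - x m) := by
        funext z; rw [hW]; exact Finset.prod_range_succ _ _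
      rw [this]
      exact ih.mul (differentiable_id.sub_const _)
  have hqabs : ∀ k, Complex.abs ((q k : ℂ)) = (q k : ℝ) := by
    intro k
    rw [show ((q k : ℚ) : ℂ) = (((q k : ℝ)) : ℂ) by push_cast; ring, Complex.abs_ofReal,
      abs_of_pos (hqpos k)]
  have hWbound : ∀ (R : ℝ) (n : ℕ) (z : ℂ), Complex.abs (z - z₀) ≤ R →
      Complex.abs (W n z) ≤ (R+1)^n := by
    intro R n z hz
    rw [hW]
    simp only [map_prod]
    have hR0 : 0 ≤ R := le_trans (Complex.abs.nonneg _) hz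
    calc ∏ k ∈ Finset.range n, Complex.abs (z - x k)
        ≤ ∏ _k ∈ Finset.range n, (R+1) := by
          apply Finset.prod_le_prod (fun k _ => Complex.abs.nonneg _)
          intro k _
          have hxk : z - x k = (z - z₀) - (q k : ℂ) := by rw [hx]; ring
          rw [hxk]
          calc Complex.abs ((z - z₀) - (q k : ℂ))
              ≤ Complex.abs (z - z₀) + Complex.abs ((q k : ℂ)) := by
                simpa only [Complex.norm_eq_abs] using norm_sub_le (z - z₀) ((q k : ℂ))
          _ ≤ R + 1 := add_le_add hz (by rw [hqabs k]; exact hqlt1 k)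
    _ = (R+1)^n := by rw [Finset.prod_const, Finset.card_range]
  have hu : ∀ R : ℝ, Summable (fun n => (Complex.abs c + 2) * ((R+1)^n * e n)) := by
    intro R
    apply Summable.mul_left
    have := Real.summable_pow_div_factorial (R+1)
    simpa [div_eq_mul_inv, he] using this
  have hterm : ∀ (R : ℝ) (n : ℕ) (z : ℂ), z ∈ Metric.ball z₀ R →
      ‖a n * W n z‖ ≤ (Complex.abs c + 2) * ((R+1)^n * e n) := by
    intro R n z hz
    rw [Metric.mem_ball, Complex.dist_eq] at hz
    rw [show ‖a n * W n z‖ = Complex.abs (a n) * Complex.abs (W n z) from norm_mul _ _]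
    calc Complex.abs (a n) * Complex.abs (W n z)
        ≤ ((Complex.abs c + 2) * e n) * (R+1)^n := by
          apply mul_le_mul (habound n) (hWbound R n z (le_of_lt hz)) (Complex.abs.nonneg _)
          positivity
    _ = (Complex.abs c + 2) * ((R+1)^n * e n) := by ring
  set F : ℂ → ℂ := fun z => ∑' n, a n * W n z with hF
  have hFdiffOn : ∀ R : ℝ, 0 < R → DifferentiableOn ℂ F (Metric.ball z₀ R) := by
    intro R hR
    have ht := tendstoUniformlyOn_tsum_nat (hu R) (fun n z hz => hterm R n z hz)
    exact ht.tendstoLocallyUniformlyOn.differentiableOn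
      (Filter.Eventually.of_forall fun N =>
        (Differentiable.fun_sum fun i _ => ((hWdiff i).const_mul (a i))).differentiableOn)
      Metric.isOpen_ball
  have hFdiff : Differentiable ℂ F := by
    intro z
    have hz : z ∈ Metric.ball z₀ (Complex.abs (z - z₀) + 1) := by
      rw [Metric.mem_ball, Complex.dist_eq, Complex.norm_eq_abs]
      linarith [Complex.abs.nonneg (z - z₀)]
    exact (hFdiffOn _ (by positivity)).differentiableAt
      (Metric.isOpen_ball.mem_nhds hz)
  -- value at z₀
  have hsum0 : Summable (fun n => a n * W n z₀) := by
    apply Summable.of_norm_bounded (hu 1)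
    intro n
    exact hterm 1 n z₀ (by simpa using Metric.mem_ball_self one_pos)
  have he0 : Tendsto e atTop (nhds 0) := by
    have h1 := (Real.summable_pow_div_factorial 1).tendsto_atTop_zero
    simpa [div_eq_mul_inv, he] using h1
  have hPlim : Tendsto P atTop (nhds c) := by
    rw [← tendsto_add_atTop_iff_nat 1]
    have habs : Tendsto (fun n => Complex.abs (c - P (n+1))) atTop (nhds 0) := by
      apply squeeze_zero (fun n => Complex.abs.nonneg _)
        (fun n => le_trans (hPc n) ?_) (he0.comp (tendsto_add_atTop_nat 1))
      show Complex.abs (v (n+1)) * e (n+1) ≤ e (n + 1)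
      nth_rewrite 2 [← one_mul (e (n+1))]
      exact mul_le_mul_of_nonneg_right (hvle1 (n+1)) (le_of_lt (hepos (n+1)))
    rw [tendsto_iff_norm_sub_tendsto_zero]
    convert habs using 2 with n
    rw [← norm_neg]
    congr 1
    ring
  have hFz₀ : F z₀ = c := by
    have h1 : Tendsto (fun N => ∑ n ∈ Finset.range N, a n * W n z₀) atTop (nhds (F z₀)) :=
      hsum0.hasSum.tendsto_sum_nat
    have hPN : ∀ N, ∑ n ∈ Finset.range N, a n * W n z₀ = P N := by
      intro N
      induction N with
      | zero => simp [hP]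
      | succ M ih => rw [Finset.sum_range_succ, ih, hPsucc]
    rw [show (fun N => ∑ n ∈ Finset.range N, a n * W n z₀) = P from funext hPN] at h1
    exact tendsto_nhds_unique h1 hPlim
  -- Gaussian values
  have hFx : ∀ m, Gauss (F (x m)) := by
    intro m
    have hzero : ∀ n ∉ Finset.range (m+1), a n * W n (x m) = 0 := by
      intro n hn
      rw [Finset.mem_range, not_lt] at hn
      have hWn : W n (x m) = 0 := by
        rw [hW]
        exact Finset.prod_eq_zero (Finset.mem_range.2 (by omega : m < n)) (by simp)
      rw [hWn, mul_zero]
    rw [hF]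
    show Gauss (∑' n, a n * W n (x m))
    rw [tsum_eq_sum hzero]
    apply Finset.sum_induction _ Gauss (fun _ _ ha hb => gauss_add ha hb) gauss_zero
    intro n _
    apply gauss_mul (haG n)
    rw [hW]
    apply Finset.prod_induction _ Gauss (fun _ _ ha hb => gauss_mul ha hb) gauss_one
    intro k _
    have : x m - x k = ((q m - q k : ℚ) : ℂ) := by rw [hx]; push_cast; ring
    rw [this]
    exact gauss_rat _
  -- convergence of the rational offsets
  have hqtend : Tendsto (fun n => ((q n : ℂ))) atTop (nhds 0) := by
    rw [tendsto_iff_norm_sub_tendsto_zero]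
    apply squeeze_zero (fun n => norm_nonneg _) (fun n => ?_)
      (tendsto_pow_atTop_nhds_zero_of_lt_one (by norm_num : (0:ℝ) ≤ 1/2) (by norm_num : (1:ℝ)/2 < 1))
    show ‖((q n : ℂ)) - 0‖ ≤ (1/2)^n
    rw [sub_zero, show ‖((q n:ℚ):ℂ)‖ = Complex.abs ((q n : ℂ)) from rfl, hqabs n]
    have h1 := hq2 n
    have h2 : s/2^(n+1) ≤ (1/2)^n := by
      rw [div_pow, one_pow]
      rw [div_le_div_iff₀ (by positivity) (by positivity)]
      calc s * 2^n ≤ 1 * 2^n := by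
            apply mul_le_mul_of_nonneg_right hs1 (by positivity)
      _ = 2^n := by ring
      _ ≤ 2^(n+1) := by
            apply pow_le_pow_right₀ (by norm_num) (by omega)
      _ = 1 * 2^(n+1) := by ring
    linarith
  exact ⟨F, q, hFdiff, (fun n => ⟨hqpos n, hqr n⟩), hqtend, hFz₀, hFx⟩

end Bers
open Bers in
/-- Bers' theorem. -/
theorem stmt1 (Ω₁ Ω₂ : Set ℂ) (h₁ : IsOpen Ω₁) (hc₁ : IsConnected Ω₁)
    (h₂ : IsOpen Ω₂)
    (φ : ↥(analyticAlg Ω₁) ≃+* ↥(analyticAlg Ω₂)) :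
    ∃ (γ : Ω₁ → Ω₂) (δ : Ω₂ → Ω₁),
      Function.LeftInverse δ γ ∧ Function.RightInverse δ γ ∧
      (((fun z : Ω₁ => (γ z : ℂ)) ∈ analyticAlg Ω₁ ∧
        (fun w : Ω₂ => (δ w : ℂ)) ∈ analyticAlg Ω₂ ∧
        ∀ (f : ↥(analyticAlg Ω₁)) (w : Ω₂), (φ f).1 w = f.1 (δ w)) ∨
       ((fun z : Ω₁ => (starRingEnd ℂ) (γ z : ℂ)) ∈ analyticAlg Ω₁ ∧
        (fun w : Ω₂ => (starRingEnd ℂ) (δ w : ℂ)) ∈ analyticAlg Ω₂ ∧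
        ∀ (f : ↥(analyticAlg Ω₁)) (w : Ω₂),
          (φ f).1 w = (starRingEnd ℂ) (f.1 (δ w)))) := by
  classical
  have pre₁ : IsPreconnected Ω₁ := hc₁.isPreconnected
  have hne₁ : Ω₁.Nonempty := hc₁.nonempty
  have hne₂ : Ω₂.Nonempty := target_nonempty φ hne₁
  have pre₂ : IsPreconnected Ω₂ := target_preconnected φ h₁ pre₁
  obtain ⟨w₀c, hw₀c⟩ := hne₂
  set w₀ : Ω₂ := ⟨w₀c, hw₀c⟩ with hw₀
  set γm : Ω₁ → Ω₂ := dmap φ.symm h₁ with hγm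
  set δm : Ω₂ → Ω₁ := dmap φ h₂ with hδm
  have hkey : ∀ (w : Ω₂) (f : ↥(analyticAlg Ω₁)), (φ f).1 w = 0 ↔ f.1 (δm w) = 0 :=
    fun w f => key φ h₂ w f
  have hkey' : ∀ (z : Ω₁) (g : ↥(analyticAlg Ω₂)), (φ.symm g).1 z = 0 ↔ g.1 (γm z) = 0 :=
    fun z g => key φ.symm h₁ z g
  have hLI : ∀ z : Ω₁, δm (γm z) = z := by
    intro z
    have h0 : (φ.symm (φ (pA Ω₁ (z:ℂ)))).1 z = 0 := by
      rw [RingEquiv.symm_apply_apply]; simp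
    have h1 : (φ (pA Ω₁ (z:ℂ))).1 (γm z) = 0 := (hkey' z _).1 h0
    have h2 : (pA Ω₁ (z:ℂ)).1 (δm (γm z)) = 0 := (hkey (γm z) _).1 h1
    rw [pA_eval] at h2
    exact Subtype.ext (sub_eq_zero.1 h2)
  have hRI : ∀ w : Ω₂, γm (δm w) = w := by
    intro w
    have h0 : (φ (φ.symm (pA Ω₂ (w:ℂ)))).1 w = 0 := by
      rw [RingEquiv.apply_symm_apply]; simp
    have h1 : (φ.symm (pA Ω₂ (w:ℂ))).1 (δm w) = 0 := (hkey w _).1 h0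
    have h2 : (pA Ω₂ (w:ℂ)).1 (γm (δm w)) = 0 := (hkey' (δm w) _).1 h1
    rw [pA_eval] at h2
    exact Subtype.ext (sub_eq_zero.1 h2)
  set pt₁ : Ω₁ := δm w₀ with hpt₁
  set σ : ℂ →+* ℂ :=
    (evalRH Ω₂ w₀).comp ((φ : ↥(analyticAlg Ω₁) →+* ↥(analyticAlg Ω₂)).comp (cst Ω₁)) with hσdef
  have hσc : ∀ (c : ℂ) (w : Ω₂), (φ (cst Ω₁ c)).1 w = σ c := by
    intro c w
    show (φ (cst Ω₁ c)).1 w = (φ (cst Ω₁ c)).1 w₀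
    exact cst_const φ h₁ h₂ pre₁ pre₂ c w w₀
  have hσeval : ∀ (f : ↥(analyticAlg Ω₁)) (w : Ω₂), (φ f).1 w = σ (f.1 (δm w)) := by
    intro f w
    rw [eval_formula φ h₂ w f]
    exact hσc _ w
  set σ' : ℂ →+* ℂ :=
    (evalRH Ω₁ pt₁).comp ((φ.symm : ↥(analyticAlg Ω₂) →+* ↥(analyticAlg Ω₁)).comp (cst Ω₂))
    with hσ'def
  have hσ'c : ∀ (c : ℂ) (z : Ω₁), (φ.symm (cst Ω₂ c)).1 z = σ' c := by
    intro c z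
    show (φ.symm (cst Ω₂ c)).1 z = (φ.symm (cst Ω₂ c)).1 pt₁
    exact cst_const φ.symm h₂ h₁ pre₂ pre₁ c z pt₁
  have hσ'eval : ∀ (g : ↥(analyticAlg Ω₂)) (z : Ω₁), (φ.symm g).1 z = σ' (g.1 (γm z)) := by
    intro g z
    rw [eval_formula φ.symm h₁ z g]
    exact hσ'c _ z
  have hσ'σ : ∀ c, σ (σ' c) = c := by
    intro c
    have h1 : cst Ω₁ (σ' c) = φ.symm (cst Ω₂ c) :=
      ext_eval fun z => by rw [cst_eval]; exact (hσ'c c z).symm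
    calc σ (σ' c) = (φ (cst Ω₁ (σ' c))).1 w₀ := rfl
    _ = (φ (φ.symm (cst Ω₂ c))).1 w₀ := by rw [h1]
    _ = c := by rw [RingEquiv.apply_symm_apply, cst_eval]
  have hσσ' : ∀ c, σ' (σ c) = c := by
    intro c
    have h1 : cst Ω₂ (σ c) = φ (cst Ω₁ c) :=
      ext_eval fun w => by rw [cst_eval]; exact (hσc c w).symm
    calc σ' (σ c) = (φ.symm (cst Ω₂ (σ c))).1 pt₁ := rfl
    _ = (φ.symm (φ (cst Ω₁ c))).1 pt₁ := by rw [h1]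
    _ = c := by rw [RingEquiv.symm_apply_apply, cst_eval]
  have hσinj : Function.Injective σ := fun u v huv => by
    rw [← hσσ' u, huv, hσσ' v]
  have hσI : σ I = I ∨ σ I = -I := by
    apply sq_eq_negone
    rw [← map_mul, Complex.I_mul_I, map_neg, map_one]
  have hσQ : ∀ q : ℚ, σ (q:ℂ) = (q:ℂ) := fun q => map_ratCast σ q
  have hGid : σ I = I → ∀ t, Gauss t → σ t = t := by
    rintro hI t ⟨a, b, rfl⟩
    rw [map_add, map_mul, hσQ, hσQ, hI]
  have hGconj : σ I = -I → ∀ t, Gauss t → σ t = (starRingEnd ℂ) t := by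
    rintro hI t ⟨a, b, rfl⟩
    rw [map_add, map_mul, hσQ, hσQ, hI]
    rw [map_add (starRingEnd ℂ), map_mul (starRingEnd ℂ),
      map_ratCast (starRingEnd ℂ) a, map_ratCast (starRingEnd ℂ) b, Complex.conj_I]
  -- the limit argument
  have hσlim : ∀ c : ℂ, ∃ L : ℕ → ℂ, (∀ n, Gauss (L n)) ∧
      Filter.Tendsto L Filter.atTop (nhds c) ∧
      Filter.Tendsto (fun n => σ (L n)) Filter.atTop (nhds (σ c)) := by
    intro c
    obtain ⟨r, hr, hball⟩ := Metric.isOpen_iff.1 h₁ ↑pt₁ pt₁.2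
    obtain ⟨F, qseq, hFdiff, hqpr, hqtend, hFz₀, hFG⟩ := newton (↑pt₁ : ℂ) hr c
    have hfmem : (fun z : Ω₁ => F ↑z) ∈ analyticAlg Ω₁ :=
      ⟨F, hFdiff.differentiableOn, fun _ => rfl⟩
    set fA : ↥(analyticAlg Ω₁) := ⟨_, hfmem⟩ with hfA
    have hmemx : ∀ n, ((↑pt₁ : ℂ) + (qseq n : ℂ)) ∈ Ω₁ := by
      intro n
      apply hball
      rw [Metric.mem_ball, Complex.dist_eq]
      have hq : (↑pt₁:ℂ) + (qseq n:ℂ) - ↑pt₁ = (((qseq n:ℝ)):ℂ) := by push_cast; ring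
      rw [hq, Complex.norm_eq_abs, Complex.abs_ofReal, abs_of_pos (hqpr n).1]
      exact (hqpr n).2
    set χ : ℕ → Ω₁ := fun n => ⟨(↑pt₁:ℂ) + (qseq n : ℂ), hmemx n⟩ with hχ
    set L : ℕ → ℂ := fun n => F ((↑pt₁:ℂ) + (qseq n : ℂ)) with hL
    refine ⟨L, fun n => hFG n, ?_, ?_⟩
    · have hx : Filter.Tendsto (fun n => ((↑pt₁:ℂ) + (qseq n:ℂ))) Filter.atTop
          (nhds (↑pt₁ : ℂ)) := by
        simpa using tendsto_const_nhds.add hqtend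
      have h3 := (hFdiff.continuous.tendsto (↑pt₁:ℂ)).comp hx
      rw [hFz₀] at h3
      exact h3
    · set hA := φ (idA Ω₁) with hhA
      obtain ⟨F₂, hF₂d, hF₂v⟩ := hA.2
      set w₁ : Ω₂ := γm pt₁ with hw₁
      have hhval : ∀ w : Ω₂, hA.1 w = σ (↑(δm w) : ℂ) := by
        intro w
        rw [hhA, hσeval (idA Ω₁) w, idA_eval]
      have hinj : ∀ w w' : Ω₂, hA.1 w = hA.1 w' → w = w' := by
        intro w w' hww
        rw [hhval w, hhval w'] at hww
        have hδ : δm w = δm w' := Subtype.ext (hσinj hww)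
        rw [← hRI w, ← hRI w', hδ]
      have hval2 : ∀ n, F₂ ↑(γm (χ n)) = σ (↑pt₁:ℂ) + (qseq n : ℂ) := by
        intro n
        rw [hF₂v (γm (χ n)), hhval (γm (χ n)), hLI (χ n)]
        show σ ((↑pt₁:ℂ) + (qseq n : ℂ)) = _
        rw [map_add, hσQ]
      have hvalw₁ : F₂ ↑w₁ = σ (↑pt₁:ℂ) := by
        rw [hF₂v w₁, hhval w₁, hw₁, hLI pt₁]
      obtain ⟨ρ, hρ, hρball⟩ := Metric.isOpen_iff.1 h₂ ↑w₁ w₁.2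
      have hnec : ¬ (∀ᶠ y in nhds (↑w₁:ℂ), F₂ y = F₂ ↑w₁) := by
        intro hev
        obtain ⟨ρ', hρ', hc'⟩ := Metric.eventually_nhds_iff.1 hev
        set τ : ℝ := min ρ' ρ / 2 with hτ
        have hmin : 0 < min ρ' ρ := lt_min hρ' hρ
        have hτpos : 0 < τ := by rw [hτ]; linarith
        set y : ℂ := (↑w₁ : ℂ) + (τ:ℂ) with hy
        have hyd : dist y ↑w₁ < min ρ' ρ := by
          rw [hy, Complex.dist_eq]
          have : (↑w₁:ℂ) + (τ:ℂ) - ↑w₁ = ((τ:ℝ):ℂ) := by push_cast; ring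
          rw [this, Complex.norm_eq_abs, Complex.abs_ofReal, abs_of_pos hτpos]
          rw [hτ]; linarith
        have hy₂ : y ∈ Ω₂ := hρball (Metric.mem_ball.2 (lt_of_lt_of_le hyd (min_le_right _ _)))
        have hyF : F₂ y = F₂ ↑w₁ := hc' (lt_of_lt_of_le hyd (min_le_left _ _))
        have heq : (⟨y, hy₂⟩ : Ω₂) = w₁ := by
          apply hinj
          rw [← hF₂v ⟨y, hy₂⟩, ← hF₂v w₁]
          exact hyF
        have : y = ↑w₁ := congrArg (fun t : Ω₂ => (t:ℂ)) heq
        rw [hy] at this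
        have hτ0 : ((τ:ℝ):ℂ) = 0 := by linear_combination this
        rw [Complex.ofReal_eq_zero] at hτ0
        linarith
      have hAn : AnalyticAt ℂ F₂ ↑w₁ := hF₂d.analyticAt (h₂.mem_nhds w₁.2)
      have hle := hAn.eventually_constant_or_nhds_le_map_nhds.resolve_left hnec
      have htend : Filter.Tendsto (fun n => (↑(γm (χ n)) : ℂ)) Filter.atTop
          (nhds (↑w₁:ℂ)) := by
        rw [Metric.tendsto_atTop]
        intro ε hε
        set ε' : ℝ := min ε ρ with hε'def
        have hε' : 0 < ε' := lt_min hε hρ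
        have hB : F₂ '' Metric.ball ↑w₁ ε' ∈ nhds (F₂ ↑w₁) :=
          hle (Filter.image_mem_map (Metric.ball_mem_nhds _ hε'))
        have hyn : Filter.Tendsto (fun n => σ (↑pt₁:ℂ) + ((qseq n:ℂ))) Filter.atTop
            (nhds (F₂ ↑w₁)) := by
          rw [hvalw₁]; simpa using tendsto_const_nhds.add hqtend
        obtain ⟨N, hN⟩ := Filter.mem_atTop_sets.1 (hyn hB)
        refine ⟨N, fun n hn => ?_⟩
        obtain ⟨b, hbmem, hbval⟩ := hN n hn
        have hbΩ : b ∈ Ω₂ := hρball (Metric.ball_subset_ball (min_le_right ε ρ) hbmem)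
        have hbeq : (⟨b, hbΩ⟩ : Ω₂) = γm (χ n) := by
          apply hinj
          rw [← hF₂v ⟨b, hbΩ⟩, ← hF₂v (γm (χ n))]
          rw [hval2 n]
          exact hbval
        calc dist (↑(γm (χ n)):ℂ) ↑w₁ = dist b ↑w₁ := by rw [← hbeq]
        _ < ε' := Metric.mem_ball.1 hbmem
        _ ≤ ε := min_le_left _ _
      obtain ⟨E₂, hE₂d, hE₂v⟩ := (φ fA).2
      have hwithin : Filter.Tendsto (fun n => (↑(γm (χ n)):ℂ)) Filter.atTop
          (nhdsWithin (↑w₁:ℂ) Ω₂) :=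
        tendsto_nhdsWithin_iff.2 ⟨htend, Filter.Eventually.of_forall fun n => (γm (χ n)).2⟩
      have hcomp : Filter.Tendsto (fun n => E₂ ↑(γm (χ n))) Filter.atTop
          (nhds (E₂ ↑w₁)) :=
        ((hE₂d.continuousOn ↑w₁ w₁.2).tendsto).comp hwithin
      have hev1 : ∀ n, E₂ ↑(γm (χ n)) = σ (L n) := by
        intro n
        rw [hE₂v (γm (χ n)), hσeval fA (γm (χ n)), hLI (χ n)]
      have hev2 : E₂ ↑w₁ = σ c := by
        rw [hE₂v w₁, hσeval fA w₁, hw₁, hLI pt₁]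
        show σ (F (↑pt₁:ℂ)) = σ c
        rw [hFz₀]
      rw [show (fun n => E₂ ↑(γm (χ n))) = fun n => σ (L n) from funext hev1, hev2] at hcomp
      exact hcomp
  have hmain : (∀ c, σ c = c) ∨ (∀ c, σ c = (starRingEnd ℂ) c) := by
    rcases hσI with hI | hI
    · left
      intro c
      obtain ⟨L, hLG, hLc, hLσ⟩ := hσlim c
      have h2 : Filter.Tendsto (fun n => σ (L n)) Filter.atTop (nhds c) := by
        rw [show (fun n => σ (L n)) = L from funext fun n => hGid hI _ (hLG n)]
        exact hLc
      exact tendsto_nhds_unique hLσ h2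
    · right
      intro c
      obtain ⟨L, hLG, hLc, hLσ⟩ := hσlim c
      have h2 : Filter.Tendsto (fun n => σ (L n)) Filter.atTop
          (nhds ((starRingEnd ℂ) c)) := by
        rw [show (fun n => σ (L n)) = fun n => (starRingEnd ℂ) (L n) from
          funext fun n => hGconj hI _ (hLG n)]
        exact ((Complex.continuous_conj.tendsto c)).comp hLc
      exact tendsto_nhds_unique hLσ h2
  refine ⟨γm, δm, hLI, hRI, ?_⟩
  rcases hmain with hid | hconj
  · left
    have hσ'id : ∀ c, σ' c = c := by
      intro c
      have h1 := hσ'σ c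
      rwa [hid (σ' c)] at h1
    refine ⟨?_, ?_, ?_⟩
    · have hfun : (fun z : Ω₁ => (↑(γm z):ℂ)) = (φ.symm (idA Ω₂)).1 := by
        funext z
        rw [hσ'eval (idA Ω₂) z, idA_eval, hσ'id]
      rw [hfun]
      exact (φ.symm (idA Ω₂)).2
    · have hfun : (fun w : Ω₂ => (↑(δm w):ℂ)) = (φ (idA Ω₁)).1 := by
        funext w
        rw [hσeval (idA Ω₁) w, idA_eval, hid]
      rw [hfun]
      exact (φ (idA Ω₁)).2
    · intro f w
      rw [hσeval f w, hid]
  · right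
    have hσ'conj : ∀ c, σ' c = (starRingEnd ℂ) c := by
      intro c
      have h1 := hσ'σ c
      rw [hconj (σ' c)] at h1
      calc σ' c = (starRingEnd ℂ) ((starRingEnd ℂ) (σ' c)) := (Complex.conj_conj _).symm
      _ = (starRingEnd ℂ) c := by rw [h1]
    refine ⟨?_, ?_, ?_⟩
    · have hfun : (fun z : Ω₁ => (starRingEnd ℂ) (↑(γm z):ℂ)) = (φ.symm (idA Ω₂)).1 := by
        funext z
        rw [hσ'eval (idA Ω₂) z, idA_eval, hσ'conj]
      rw [hfun]
      exact (φ.symm (idA Ω₂)).2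
    · have hfun : (fun w : Ω₂ => (starRingEnd ℂ) (↑(δm w):ℂ)) = (φ (idA Ω₁)).1 := by
        funext w
        rw [hσeval (idA Ω₁) w, idA_eval, hconj]
      rw [hfun]
      exact (φ (idA Ω₁)).2
    · intro f w
      rw [hσeval f w, hconj]

end
end

section
/- Let (R_n)_{n < κ} with κ ≤ ℵ₀ be a countable family of Polish rings with unity, each of which is algebraically determined, and let R = ∏_{n < κ} R_n with the product topology and coordinatewise ring operations. Then R is an algebraically determined Polish ring. -/
noncomputable section

open Filter Set Topology

section PettisLemmas

variable {H : Type*} [TopologicalSpace H]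

private lemma isOpen_not_isMeagre [BaireSpace H] {U : Set H} (hU : IsOpen U)
    (hne : U.Nonempty) : ¬ IsMeagre U := fun h => by
  obtain ⟨x, hx, hxU⟩ := (dense_of_mem_residual h).exists_mem_open hU hne
  exact hx hxU

variable [AddCommGroup H] [IsTopologicalAddGroup H]

private lemma isMeagre_preimage_translate (g : H) {M : Set H} (hM : IsMeagre M) :
    IsMeagre ((fun x => g + x) ⁻¹' M) :=
  hM.preimage_of_isOpenMap (continuous_add_left g) (isOpenMap_add_left g)

/-- Pettis' theorem: if `A` is Baire measurable and non-meager in a topological group which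
is a Baire space, then `A - A` is a neighborhood of `0`. -/
private lemma pettis [BaireSpace H] {A : Set H} (hA : BaireMeasurableSet A)
    (hnm : ¬ IsMeagre A) : {g : H | ∃ a ∈ A, ∃ b ∈ A, g = a - b} ∈ 𝓝 (0 : H) := by
  obtain ⟨U, hUo, hAU⟩ := hA.residualEq_isOpen
  -- the two halves of the symmetric difference are meager
  have hUA : IsMeagre (U \ A) := by
    apply Filter.mem_of_superset hAU
    intro x hx
    simp only [mem_compl_iff, mem_diff, not_and, not_not]
    intro hxU
    have : (x ∈ A) = (x ∈ U) := hx
    rw [this]; exact hxU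
  have hAU' : IsMeagre (A \ U) := by
    apply Filter.mem_of_superset hAU
    intro x hx
    simp only [mem_compl_iff, mem_diff, not_and, not_not]
    intro hxA
    have : (x ∈ A) = (x ∈ U) := hx
    rw [← this]; exact hxA
  -- U is nonempty
  have hUne : U.Nonempty := by
    rcases Set.eq_empty_or_nonempty U with h | h
    · exfalso
      apply hnm
      apply hAU'.mono
      intro x hx
      exact ⟨hx, by simp [h]⟩
    · exact h
  obtain ⟨u₀, hu₀⟩ := hUne
  -- it suffices to show that U - U is contained in the target set
  have key : ∀ g ∈ {g : H | ∃ u ∈ U, ∃ v ∈ U, g = u - v}, ∃ a ∈ A, ∃ b ∈ A, g = a - b := by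
    rintro g ⟨u₁, hu₁, u₂, hu₂, rfl⟩
    set g := u₁ - u₂ with hg
    -- T = U ∩ (U + g) is open, nonempty (contains u₁), hence non-meager
    set T : Set H := U ∩ ((fun x => x + -g) ⁻¹' U) with hT
    have hTo : IsOpen T := hUo.inter (hUo.preimage (continuous_id.add continuous_const))
    have hTne : T.Nonempty := ⟨u₁, hu₁, by
      show u₁ + -g ∈ U
      have : u₁ + -g = u₂ := by rw [hg]; abel
      rwa [this]⟩
    have hTnm : ¬ IsMeagre T := isOpen_not_isMeagre hTo hTne
    -- M is meager
    set M : Set H := (U \ A) ∪ ((fun x => x + -g) ⁻¹' (U \ A)) with hM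
    have hMm : IsMeagre M := by
      have h2 : IsMeagre ((fun x => x + -g) ⁻¹' (U \ A)) := by
        have : (fun x : H => x + -g) = (fun x : H => -g + x) := by
          funext x; abel
        rw [this]
        exact isMeagre_preimage_translate _ hUA
      rw [hM, IsMeagre, Set.compl_union]
      exact Filter.inter_mem hUA h2
    -- pick a point of T outside M
    have : ∃ x, x ∈ T ∧ x ∉ M := by
      by_contra h
      push_neg at h
      exact hTnm (hMm.mono fun x hx => h x hx)
    obtain ⟨x, ⟨hxU, hxgU⟩, hxM⟩ := this
    have hxA : x ∈ A := by
      by_contra hxA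
      exact hxM (Or.inl ⟨hxU, hxA⟩)
    have hygA : x + -g ∈ A := by
      by_contra hyA
      exact hxM (Or.inr ⟨hxgU, hyA⟩)
    refine ⟨x, hxA, x + -g, hygA, ?_⟩
    abel
  -- U - U is a neighborhood of 0
  refine Filter.mem_of_superset ?_ key
  have hsub : (fun x : H => x + u₀) ⁻¹' U ⊆ {g : H | ∃ u ∈ U, ∃ v ∈ U, g = u - v} := by
    intro g hgU
    exact ⟨g + u₀, hgU, u₀, hu₀, by abel⟩
  apply Filter.mem_of_superset _ hsub
  apply (hUo.preimage (continuous_id.add continuous_const)).mem_nhds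
  show (0 : H) + u₀ ∈ U
  rwa [zero_add]

/-- The open mapping / automatic continuity statement: a continuous additive isomorphism
between Polish abelian topological groups has continuous inverse. -/
private lemma continuous_symm_of_continuous
    {G : Type*} [TopologicalSpace G] [AddCommGroup G] [IsTopologicalAddGroup G] [PolishSpace G]
    {H : Type*} [TopologicalSpace H] [AddCommGroup H] [IsTopologicalAddGroup H] [PolishSpace H]
    (f : G ≃+ H) (hf : Continuous f) : Continuous f.symm := by
  haveI : BaireSpace H := by
    letI := TopologicalSpace.upgradeIsCompletelyPseudoMetrizable H
    infer_instance
  borelize G H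
  have hemb : MeasurableEmbedding f := hf.measurableEmbedding f.injective
  apply continuous_of_continuousAt_zero f.symm
  rw [ContinuousAt, map_zero, tendsto_def]
  intro U hU
  -- shrink U to a closed symmetric neighborhood
  obtain ⟨V, hV0, hVc, hVsym, hVU⟩ := exists_closed_nhds_zero_neg_eq_add_subset hU
  set A : Set H := f '' V with hA
  have hABorel : MeasurableSet A := hemb.measurableSet_image' hVc.measurableSet
  have hABaire : BaireMeasurableSet A := hABorel.baireMeasurableSet
  -- A is non-meager: countably many translates of A cover H
  obtain ⟨D, hDc, hDd⟩ := TopologicalSpace.exists_countable_dense G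
  have hcover : (Set.univ : Set H) ⊆ ⋃ d ∈ D, (fun y => -f d + y) ⁻¹' A := by
    intro y _
    set x : G := f.symm y with hx
    have : ∃ d ∈ D, x - d ∈ V := by
      have hnb : (fun d : G => x - d) ⁻¹' V ∈ 𝓝 x := by
        apply ContinuousAt.preimage_mem_nhds (Continuous.continuousAt
          (continuous_const.sub continuous_id))
        simpa [hx] using hV0
      have := mem_closure_iff_nhds.1 (hDd x) _ hnb
      obtain ⟨d, hd1, hd2⟩ := this
      exact ⟨d, hd2, hd1⟩
    obtain ⟨d, hdD, hdV⟩ := this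
    refine Set.mem_biUnion hdD ?_
    show -f d + y ∈ A
    refine ⟨x - d, hdV, ?_⟩
    rw [map_sub]
    have : f x = y := f.apply_symm_apply y
    rw [this]
    abel
  have hAnm : ¬ IsMeagre A := by
    intro hAm
    have hall : IsMeagre (Set.univ : Set H) := by
      apply IsMeagre.mono hcover
      rw [IsMeagre, Set.compl_iUnion₂]
      exact (countable_bInter_mem hDc).2 fun d _ =>
        isMeagre_preimage_translate (-f d) hAm
    have : Dense (∅ : Set H) := by
      apply dense_of_mem_residual
      rw [IsMeagre, Set.compl_univ] at hall
      simpa using hall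
    obtain ⟨z, hz⟩ := this.nonempty
    exact hz
  -- Pettis: A - A is a neighborhood of 0, and it is contained in f '' U ⊆ f.symm ⁻¹' U
  have hnhds := pettis hABaire hAnm
  apply Filter.mem_of_superset hnhds
  rintro g ⟨a, ⟨v₁, hv₁, rfl⟩, b, ⟨v₂, hv₂, rfl⟩, rfl⟩
  show f.symm (f v₁ - f v₂) ∈ U
  rw [← map_sub, f.symm_apply_apply]
  apply hVU
  have hv₂' : -v₂ ∈ V := by
    rw [← hVsym]
    exact Set.neg_mem_neg.2 hv₂
  have : v₁ - v₂ = v₁ + -v₂ := sub_eq_add_neg _ _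
  rw [this]
  exact Set.add_mem_add hv₁ hv₂'

end PettisLemmas

/-- a countable product of algebraically determined Polish rings with unity
is an algebraically determined Polish ring. -/
theorem stmt3 (ι : Type) [Countable ι]
    (R : ι → Type) [∀ i, TopologicalSpace (R i)] [∀ i, Ring (R i)]
    [∀ i, IsTopologicalRing (R i)] [∀ i, PolishSpace (R i)]
    (hdet : ∀ i, ∀ (S : Type) [TopologicalSpace S] [Ring S] [IsTopologicalRing S]
      [PolishSpace S], ∀ φ : S ≃+* R i, Continuous ⇑φ ∧ Continuous ⇑φ.symm)
    (S : Type) [TopologicalSpace S] [Ring S] [IsTopologicalRing S] [PolishSpace S]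
    (φ : S ≃+* (∀ i, R i)) :
    Continuous ⇑φ ∧ Continuous ⇑φ.symm := by
  classical
  -- First: φ is continuous, coordinate by coordinate, using the corner rings.
  have key : ∀ i, Continuous fun x : S => φ x i := by
    intro i
    set e : ∀ j, R j := Pi.single i (1 : R i) with he
    set s : S := φ.symm e with hs
    have hse : φ s = e := φ.apply_symm_apply e
    have hmul_left : ∀ v : ∀ j, R j, e * v = Pi.single i (v i) := by
      intro v; funext j
      by_cases h : j = i
      · subst h; simp [he]
      · simp [he, Pi.single_apply, h]
    have hee : e * e = e := by
      rw [hmul_left]; simp [he]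
    have hidem : s * s = s := by
      apply φ.injective
      rw [map_mul, hse, hee]
    have hmem_mul : ∀ x : S, s * (s * x) = s * x := fun x => by
      rw [← mul_assoc, hidem]
    -- corner subtype
    set C := {x : S // s * x = x} with hC
    have hrepr : ∀ x : C, φ x.1 = Pi.single i (φ x.1 i) := by
      intro x
      conv_lhs => rw [← x.2, map_mul, hse, hmul_left]
    set f : C → R i := fun x => φ x.1 i with hf
    have finj : Function.Injective f := by
      intro x y hxy
      apply Subtype.ext
      apply φ.injective
      rw [hrepr x, hrepr y]
      exact congrArg _ hxy
    letI : Zero C := ⟨⟨0, by rw [mul_zero]⟩⟩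
    letI : One C := ⟨⟨s, hidem⟩⟩
    letI : Add C := ⟨fun x y => ⟨x.1 + y.1, by rw [mul_add, x.2, y.2]⟩⟩
    letI : Mul C := ⟨fun x y => ⟨x.1 * y.1, by rw [← mul_assoc, x.2]⟩⟩
    letI : Neg C := ⟨fun x => ⟨-x.1, by rw [mul_neg, x.2]⟩⟩
    letI : Sub C := ⟨fun x y => ⟨x.1 - y.1, by rw [mul_sub, x.2, y.2]⟩⟩
    letI : SMul ℕ C := ⟨fun n x => ⟨n • x.1, by rw [mul_smul_comm, x.2]⟩⟩
    letI : SMul ℤ C := ⟨fun n x => ⟨n • x.1, by rw [mul_smul_comm, x.2]⟩⟩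
    letI : Pow C ℕ := ⟨fun x n => ⟨s * x.1 ^ n, hmem_mul _⟩⟩
    letI : NatCast C := ⟨fun n => ⟨s * (n : S), hmem_mul _⟩⟩
    letI : IntCast C := ⟨fun n => ⟨s * (n : S), hmem_mul _⟩⟩
    letI : Ring C := by
      refine Function.Injective.ring f finj ?_ ?_ ?_ ?_ ?_ ?_ ?_ ?_ ?_ ?_ ?_
      · show φ (0 : S) i = 0
        rw [map_zero]; rfl
      · show φ s i = 1
        rw [hse, he]; simp
      · intro x y
        show φ (x.1 + y.1) i = φ x.1 i + φ y.1 i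
        rw [map_add]; rfl
      · intro x y
        show φ (x.1 * y.1) i = φ x.1 i * φ y.1 i
        rw [map_mul]; rfl
      · intro x
        show φ (-x.1) i = -(φ x.1 i)
        rw [map_neg]; rfl
      · intro x y
        show φ (x.1 - y.1) i = φ x.1 i - φ y.1 i
        rw [map_sub]; rfl
      · intro n x
        show φ (n • x.1) i = n • (φ x.1 i)
        rw [map_nsmul]; rfl
      · intro n x
        show φ (n • x.1) i = n • (φ x.1 i)
        rw [map_zsmul]; rfl
      · intro x n
        show φ (s * x.1 ^ n) i = (φ x.1 i) ^ n
        rw [map_mul, hse, map_pow, hmul_left]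
        simp
      · intro n
        show φ (s * (n : S)) i = (n : R i)
        rw [map_mul, hse, map_natCast, hmul_left]
        simp
      · intro n
        show φ (s * (n : S)) i = (n : R i)
        rw [map_mul, hse, map_intCast, hmul_left]
        simp
    haveI : ContinuousAdd C := by
      refine ⟨?_⟩
      apply Continuous.subtype_mk
      exact (continuous_subtype_val.comp continuous_fst).add
        (continuous_subtype_val.comp continuous_snd)
    haveI : ContinuousMul C := by
      refine ⟨?_⟩
      apply Continuous.subtype_mk
      exact (continuous_subtype_val.comp continuous_fst).mul
        (continuous_subtype_val.comp continuous_snd)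
    haveI : ContinuousNeg C := by
      refine ⟨?_⟩
      apply Continuous.subtype_mk
      exact continuous_subtype_val.neg
    haveI : IsTopologicalRing C := { }
    haveI : PolishSpace C := by
      have hcl : IsClosed {x : S | s * x = x} :=
        isClosed_eq (continuous_const.mul continuous_id) continuous_id
      exact hcl.polishSpace
    -- the ring isomorphism C ≃+* R i
    set ψ : C ≃+* R i :=
      { toFun := f
        invFun := fun r => ⟨φ.symm (Pi.single i r), by
          show s * φ.symm (Pi.single i r) = φ.symm (Pi.single i r)
          rw [hs, ← map_mul, hmul_left]
          simp⟩
        left_inv := by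
          intro x
          apply Subtype.ext
          show φ.symm (Pi.single i (φ x.1 i)) = x.1
          rw [← hrepr x, φ.symm_apply_apply]
        right_inv := by
          intro r
          show φ (φ.symm (Pi.single i r)) i = r
          rw [φ.apply_symm_apply]
          simp
        map_mul' := by
          intro x y
          show φ (x.1 * y.1) i = φ x.1 i * φ y.1 i
          rw [map_mul]; rfl
        map_add' := by
          intro x y
          show φ (x.1 + y.1) i = φ x.1 i + φ y.1 i
          rw [map_add]; rfl } with hψ
    obtain ⟨hψc, -⟩ := hdet i C ψ
    have heq : (fun x : S => φ x i) = ψ ∘ (fun x : S => (⟨s * x, hmem_mul x⟩ : C)) := by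
      funext x
      show φ x i = φ (s * x) i
      rw [map_mul, hse, hmul_left]
      simp
    rw [heq]
    exact hψc.comp ((continuous_const.mul continuous_id).subtype_mk _)
  have h1 : Continuous ⇑φ := continuous_pi key
  refine ⟨h1, ?_⟩
  exact continuous_symm_of_continuous φ.toAddEquiv h1

end
end

section
/- There is no Polish topology on the ring B(𝔻) of bounded analytic functions on the open unit disk which makes it a topological ring: if τ is a topology on B(𝔻) that is separable and completely metrizable and for which addition and multiplication are continuous, a contradiction follows. -/
open Complex
open scoped Classical

noncomputable section

/-- The open unit disk. -/
def unitDisk : Set ℂ := {z : ℂ | ‖z‖ < 1}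

/-- The ring `B(D)` of bounded analytic functions on the open unit disk. -/
def boundedAnalytic : Subalgebra ℂ (↥unitDisk → ℂ) where
  carrier := {f | f ∈ analyticAlg unitDisk ∧ ∃ C : ℝ, ∀ z, ‖f z‖ ≤ C}
  add_mem' := by
    rintro f g ⟨hf, C, hC⟩ ⟨hg, C', hC'⟩
    refine ⟨add_mem hf hg, C + C', fun z => ?_⟩
    show ‖f z + g z‖ ≤ C + C'
    exact le_trans (norm_add_le _ _) (add_le_add (hC z) (hC' z))
  mul_mem' := by
    rintro f g ⟨hf, C, hC⟩ ⟨hg, C', hC'⟩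
    refine ⟨mul_mem hf hg, max C 0 * max C' 0, fun z => ?_⟩
    show ‖f z * g z‖ ≤ max C 0 * max C' 0
    rw [norm_mul]
    exact mul_le_mul (le_trans (hC z) (le_max_left _ _))
      (le_trans (hC' z) (le_max_left _ _)) (norm_nonneg _) (le_max_right _ _)
  algebraMap_mem' := fun r =>
    ⟨(analyticAlg unitDisk).algebraMap_mem r, ‖r‖, fun _ => by simp⟩

namespace NoPolish

lemma mem_bA_iff (f : ↥unitDisk → ℂ) :
    f ∈ boundedAnalytic ↔
      (∃ F : ℂ → ℂ, DifferentiableOn ℂ F unitDisk ∧ ∀ z : ↥unitDisk, F z = f z) ∧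
        ∃ C : ℝ, ∀ z, ‖f z‖ ≤ C := Iff.rfl

lemma isOpen_unitDisk : IsOpen unitDisk :=
  isOpen_lt continuous_norm continuous_const

lemma unitDisk_eq_ball : unitDisk = Metric.ball (0 : ℂ) 1 := by
  ext z; simp [unitDisk, Metric.mem_ball, Complex.dist_eq]

lemma isPreconnected_unitDisk : IsPreconnected unitDisk := by
  rw [unitDisk_eq_ball]
  exact (convex_ball (0:ℂ) 1).isPreconnected

/-- constant functions -/
def cst (c : ℂ) : ↥boundedAnalytic :=
  ⟨fun _ => c, ⟨⟨fun _ => c, differentiableOn_const c, fun _ => rfl⟩,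
    ⟨‖c‖, fun _ => le_refl _⟩⟩⟩

lemma val_sub (f g : ↥boundedAnalytic) (z : ↥unitDisk) :
    (((f - g : ↥boundedAnalytic) : ↥unitDisk → ℂ)) z = (f : ↥unitDisk → ℂ) z - (g : ↥unitDisk → ℂ) z := by
  rfl

lemma val_mul (f g : ↥boundedAnalytic) (z : ↥unitDisk) :
    (((f * g : ↥boundedAnalytic) : ↥unitDisk → ℂ)) z = (f : ↥unitDisk → ℂ) z * (g : ↥unitDisk → ℂ) z := by
  rfl

lemma val_one (z : ↥unitDisk) : ((1 : ↥boundedAnalytic) : ↥unitDisk → ℂ) z = 1 := rfl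

/-- bounded below implies unit -/
lemma isUnit_of_bddBelow (f : ↥boundedAnalytic) (ε : ℝ) (hε : 0 < ε)
    (h : ∀ z, ε ≤ ‖(f : ↥unitDisk → ℂ) z‖) : IsUnit f := by
  obtain ⟨⟨F, hF, hFval⟩, -⟩ := (mem_bA_iff _).1 f.2
  have hne : ∀ w ∈ unitDisk, F w ≠ 0 := by
    intro w hw
    have : ε ≤ ‖F w‖ := by rw [hFval ⟨w, hw⟩]; exact h ⟨w, hw⟩
    intro h0; rw [h0] at this; simp at this; linarith
  have hgmem : (fun z : ↥unitDisk => ((f : ↥unitDisk → ℂ) z)⁻¹) ∈ boundedAnalytic := by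
    rw [mem_bA_iff]
    refine ⟨⟨fun w => (F w)⁻¹, hF.inv hne, fun z => by simp only []; rw [hFval z]⟩, ⟨ε⁻¹, fun z => ?_⟩⟩
    rw [norm_inv]
    exact inv_anti₀ hε (h z)
  refine IsUnit.of_mul_eq_one (a := f) ⟨_, hgmem⟩ ?_
  ext z
  show (f : ↥unitDisk → ℂ) z * ((f : ↥unitDisk → ℂ) z)⁻¹ = 1
  refine mul_inv_cancel₀ ?_
  intro h0
  have := h z; rw [h0] at this; simp at this; linarith

lemma not_isUnit_of_zero (f : ↥boundedAnalytic) (z : ↥unitDisk)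
    (h : (f : ↥unitDisk → ℂ) z = 0) : ¬ IsUnit f := by
  intro hu
  obtain ⟨g, hg⟩ := hu.exists_right_inv
  have := congrFun (congrArg Subtype.val hg) z
  rw [show ((f * g : ↥boundedAnalytic) : ↥unitDisk → ℂ) z
      = (f : ↥unitDisk → ℂ) z * (g : ↥unitDisk → ℂ) z from rfl] at this
  rw [h, zero_mul] at this
  exact zero_ne_one this


def ratC (q : ℚ × ℚ) : ℂ := (q.1 : ℂ) + (q.2 : ℂ) * Complex.I

lemma ratC_re (q : ℚ × ℚ) : (ratC q).re = (q.1 : ℝ) := by simp [ratC]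
lemma ratC_im (q : ℚ × ℚ) : (ratC q).im = (q.2 : ℝ) := by simp [ratC]

lemma abs_sub_le' (a b : ℂ) : ‖a - b‖ ≤ ‖a‖ + ‖b‖ := by
  rw [sub_eq_add_neg]
  exact (norm_add_le _ _).trans (by rw [norm_neg])

lemma abs_sub_abs_le (a b : ℂ) : ‖a‖ - ‖b‖ ≤ ‖a - b‖ := by
  have h := norm_add_le (a - b) b
  rw [sub_add_cancel] at h
  linarith

lemma abs_sub_comm' (a b : ℂ) : ‖a - b‖ = ‖b - a‖ :=
  norm_sub_rev a b

lemma diam_le (n : ℕ) (f : ↥boundedAnalytic)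
    (h : ∀ q : ℚ × ℚ, (n : ℝ) < ‖ratC q‖ → IsUnit (f - cst (ratC q))) :
    ∀ z w : ↥unitDisk,
      ‖(f : ↥unitDisk → ℂ) z - (f : ↥unitDisk → ℂ) w‖ ≤ 2 * n := by
  by_contra hc
  push_neg at hc
  obtain ⟨z₀, w₀, hgt⟩ := hc
  set fv : ↥unitDisk → ℂ := (f : ↥unitDisk → ℂ) with hfv
  have hnc : fv z₀ ≠ fv w₀ := by
    intro he
    rw [he] at hgt
    simp at hgt
    have : (0:ℝ) ≤ 2 * n := by positivity
    linarith
  have hpt : ∃ z₁ : ↥unitDisk, (n : ℝ) < ‖fv z₁‖ := by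
    by_contra hp
    push_neg at hp
    linarith [abs_sub_le' (fv z₀) (fv w₀), hp z₀, hp w₀]
  obtain ⟨z₁, hz₁⟩ := hpt
  obtain ⟨⟨F, hF, hFv⟩, -⟩ := (mem_bA_iff _).1 f.2
  have han : AnalyticOnNhd ℂ F unitDisk := hF.analyticOnNhd isOpen_unitDisk
  rcases han.is_constant_or_isOpen isPreconnected_unitDisk with ⟨w, hwc⟩ | hopen
  · apply hnc
    have e1 : fv z₀ = w := by
      have h1 := hwc z₀.1 z₀.2
      rw [hFv z₀] at h1
      exact h1
    have e2 : fv w₀ = w := by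
      have h1 := hwc w₀.1 w₀.2
      rw [hFv w₀] at h1
      exact h1
    rw [e1, e2]
  · have himg : IsOpen (F '' unitDisk) := hopen unitDisk subset_rfl isOpen_unitDisk
    have hpmem : F z₁.1 ∈ F '' unitDisk := ⟨z₁.1, z₁.2, rfl⟩
    obtain ⟨r, hr, hball⟩ := Metric.isOpen_iff.1 himg _ hpmem
    set p : ℂ := F z₁.1 with hp
    have hpabs : (n : ℝ) < ‖p‖ := by rw [hp, hFv z₁]; exact hz₁
    set δ : ℝ := min r (‖p‖ - n) with hδ
    have hδpos : 0 < δ := lt_min hr (by linarith)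
    obtain ⟨q₁, hq₁⟩ := exists_rat_near p.re (by positivity : (0:ℝ) < δ/2)
    obtain ⟨q₂, hq₂⟩ := exists_rat_near p.im (by positivity : (0:ℝ) < δ/2)
    set d : ℂ := ratC (q₁, q₂) with hd
    have hdp : ‖d - p‖ < δ := by
      calc ‖d - p‖ ≤ |(d - p).re| + |(d - p).im| :=
            Complex.norm_le_abs_re_add_abs_im _
        _ < δ/2 + δ/2 := by
            refine add_lt_add ?_ ?_
            · rw [Complex.sub_re, hd, ratC_re]
              rw [abs_sub_comm]
              exact hq₁
            · rw [Complex.sub_im, hd, ratC_im]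
              rw [abs_sub_comm]
              exact hq₂
        _ = δ := by ring
    have hdn : (n : ℝ) < ‖d‖ := by
      have h1 := abs_sub_abs_le p d
      rw [abs_sub_comm'] at h1
      have h2 : ‖d - p‖ < ‖p‖ - n := hdp.trans_le (min_le_right _ _)
      linarith
    have hdmem : d ∈ F '' unitDisk := by
      apply hball
      rw [Metric.mem_ball, Complex.dist_eq]
      exact hdp.trans_le (min_le_left _ _)
    obtain ⟨w₁, hw₁, hFw₁⟩ := hdmem
    refine not_isUnit_of_zero (f - cst d) ⟨w₁, hw₁⟩ ?_ (h (q₁, q₂) (by rw [← hd]; exact hdn))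
    rw [val_sub]
    show fv ⟨w₁, hw₁⟩ - d = 0
    have hv : fv ⟨w₁, hw₁⟩ = F w₁ := (hFv ⟨w₁, hw₁⟩).symm
    rw [hv, hFw₁, sub_self]

lemma cover (f : ↥boundedAnalytic) :
    ∃ n : ℕ, ∀ q : ℚ × ℚ, (n : ℝ) < ‖ratC q‖ → IsUnit (f - cst (ratC q)) := by
  obtain ⟨-, Cb, hCb⟩ := (mem_bA_iff _).1 f.2
  obtain ⟨n, hn⟩ := exists_nat_ge Cb
  refine ⟨n, fun q hq => ?_⟩
  refine isUnit_of_bddBelow _ (‖ratC q‖ - n) (by linarith) (fun z => ?_)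
  rw [val_sub]
  show ‖ratC q‖ - n ≤ ‖(f : ↥unitDisk → ℂ) z - (cst (ratC q) : ↥unitDisk → ℂ) z‖
  have hcv : (cst (ratC q) : ↥unitDisk → ℂ) z = ratC q := rfl
  rw [hcv]
  have h1 := abs_sub_abs_le (ratC q) ((f : ↥unitDisk → ℂ) z)
  rw [abs_sub_comm'] at h1
  have h2 := hCb z
  linarith


def famFun (M t : ℝ) : ℂ → ℂ := fun w => (M:ℂ) * Complex.exp ((t:ℂ) * (w+1)/(w-1))

lemma sub_one_ne_zero_of_re_neg (ω : ℂ) (hω : ω.re < 0) : ω - 1 ≠ 0 := by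
  intro h0
  have := congrArg Complex.re h0
  simp [Complex.sub_re] at this
  linarith

lemma mem_unitDisk_of_re_neg (ω : ℂ) (hω : ω.re < 0) : (ω+1)/(ω-1) ∈ unitDisk := by
  have hne : ω - 1 ≠ 0 := sub_one_ne_zero_of_re_neg ω hω
  show ‖(ω+1)/(ω-1)‖ < 1
  rw [norm_div, div_lt_one (norm_pos_iff.mpr hne)]
  have h2 : (‖ω+1‖)^2 < (‖ω-1‖)^2 := by
    rw [Complex.sq_norm, Complex.sq_norm, Complex.normSq_apply, Complex.normSq_apply]
    simp only [Complex.add_re, Complex.add_im, Complex.sub_re, Complex.sub_im,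
      Complex.one_re, Complex.one_im]
    nlinarith
  exact lt_of_pow_lt_pow_left₀ 2 (norm_nonneg _) h2

lemma mob (ω : ℂ) (hω : ω.re < 0) : ((ω+1)/(ω-1) + 1)/((ω+1)/(ω-1) - 1) = ω := by
  have hne : ω - 1 ≠ 0 := sub_one_ne_zero_of_re_neg ω hω
  have h1 : ((ω+1)/(ω-1) + 1) = 2*ω/(ω-1) := by field_simp; ring
  have h2 : ((ω+1)/(ω-1) - 1) = 2/(ω-1) := by field_simp; ring
  rw [h1, h2, div_div_div_cancel_right₀]
  · rw [mul_comm, mul_div_assoc, div_self (two_ne_zero), mul_one]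
  · exact hne

lemma famFun_val (M t : ℝ) (ω : ℂ) (hω : ω.re < 0) :
    famFun M t ((ω+1)/(ω-1)) = (M:ℂ) * Complex.exp ((t:ℂ) * ω) := by
  unfold famFun
  rw [mul_div_assoc, mob ω hω]

lemma fam_sep (M a b : ℝ) (hM : 0 ≤ M) (ha : 0 < a) (hab : a < b) :
    ∃ z₁ z₂ : ↥unitDisk,
      M ≤ ‖(famFun M a z₁.1 - famFun M b z₁.1)
        - (famFun M a z₂.1 - famFun M b z₂.1)‖ := by
  have hb : 0 < b := ha.trans hab
  set δ : ℝ := 1/(10*b) with hδ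
  have hδpos : 0 < δ := by positivity
  set yy : ℝ := Real.pi/(b - a) with hyy
  set ω₁ : ℂ := ((-δ : ℝ) : ℂ) with hω₁
  set ω₂ : ℂ := ((-δ : ℝ) : ℂ) + (yy : ℂ) * Complex.I with hω₂
  have hre₁ : ω₁.re < 0 := by rw [hω₁]; simp [hδpos]
  have hre₂ : ω₂.re < 0 := by
    rw [hω₂]
    simp [Complex.add_re, Complex.ofReal_re, Complex.mul_re, Complex.I_re, Complex.I_im]
    exact hδpos
  refine ⟨⟨(ω₁+1)/(ω₁-1), mem_unitDisk_of_re_neg ω₁ hre₁⟩,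
    ⟨(ω₂+1)/(ω₂-1), mem_unitDisk_of_re_neg ω₂ hre₂⟩, ?_⟩
  set A : ℝ := Real.exp (-(a*δ)) with hA
  set B : ℝ := Real.exp (-(b*δ)) with hB
  set e : ℂ := Complex.exp ((↑(a*yy) : ℂ) * Complex.I) with he
  have hEa1 : Complex.exp ((a:ℂ) * ω₁) = (A : ℂ) := by
    rw [show (a:ℂ) * ω₁ = ((-(a*δ) : ℝ) : ℂ) by rw [hω₁]; push_cast; ring]
    rw [← Complex.ofReal_exp]
  have hEb1 : Complex.exp ((b:ℂ) * ω₁) = (B : ℂ) := by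
    rw [show (b:ℂ) * ω₁ = ((-(b*δ) : ℝ) : ℂ) by rw [hω₁]; push_cast; ring]
    rw [← Complex.ofReal_exp]
  have hEa2 : Complex.exp ((a:ℂ) * ω₂) = (A : ℂ) * e := by
    rw [show (a:ℂ) * ω₂ = ((-(a*δ) : ℝ) : ℂ) + (↑(a*yy) : ℂ) * Complex.I by
      rw [hω₂]; push_cast; ring]
    rw [Complex.exp_add, ← Complex.ofReal_exp, he]
  have hba : b - a ≠ 0 := by linarith
  have hbayy : ((b-a)*yy : ℝ) = Real.pi := by
    rw [hyy, mul_div_assoc']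
    exact mul_div_cancel_left₀ _ hba
  have hEb2 : Complex.exp ((b:ℂ) * ω₂) = -((B : ℂ) * e) := by
    rw [show (b:ℂ) * ω₂ = (((-(b*δ) : ℝ) : ℂ) + (↑(a*yy) : ℂ) * Complex.I)
        + (↑((b-a)*yy) : ℂ) * Complex.I by rw [hω₂]; push_cast; ring]
    rw [Complex.exp_add, Complex.exp_add, ← Complex.ofReal_exp, hbayy,
      Complex.exp_pi_mul_I, he]
    ring
  rw [famFun_val M a ω₁ hre₁, famFun_val M b ω₁ hre₁,
    famFun_val M a ω₂ hre₂, famFun_val M b ω₂ hre₂]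
  have hexpr : ((M:ℂ) * Complex.exp ((a:ℂ) * ω₁) - (M:ℂ) * Complex.exp ((b:ℂ) * ω₁))
      - ((M:ℂ) * Complex.exp ((a:ℂ) * ω₂) - (M:ℂ) * Complex.exp ((b:ℂ) * ω₂))
      = (M:ℂ) * (((A:ℂ) - (B:ℂ)) - e * ((A:ℂ) + (B:ℂ))) := by
    rw [hEa1, hEb1, hEa2, hEb2]
    ring
  rw [hexpr, norm_mul, Complex.norm_real, Real.norm_eq_abs, _root_.abs_of_nonneg hM]
  have habse : ‖e‖ = 1 := by
    rw [he, Complex.norm_exp]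
    simp
  have hApos : 0 < A := Real.exp_pos _
  have hBpos : 0 < B := Real.exp_pos _
  have hBA : B ≤ A := by
    rw [hA, hB]
    apply Real.exp_le_exp.mpr
    nlinarith
  have hbδ : b * δ = 1/10 := by
    rw [hδ]
    field_simp
  have hBlb : (9:ℝ)/10 ≤ B := by
    rw [hB, hbδ]
    have := Real.add_one_le_exp (-(1/10) : ℝ)
    linarith
  have h1 : ‖(A:ℂ) - (B:ℂ)‖ = A - B := by
    rw [← Complex.ofReal_sub, Complex.norm_real, Real.norm_eq_abs, _root_.abs_of_nonneg (by linarith)]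
  have h2 : ‖e * ((A:ℂ) + (B:ℂ))‖ = A + B := by
    rw [norm_mul, habse, one_mul, ← Complex.ofReal_add, Complex.norm_real, Real.norm_eq_abs,
      _root_.abs_of_nonneg (by linarith)]
  have h3 := abs_sub_abs_le (e * ((A:ℂ) + (B:ℂ))) ((A:ℂ) - (B:ℂ))
  have h5 : e * ((A:ℂ) + (B:ℂ)) - ((A:ℂ) - (B:ℂ))
      = -((((A:ℂ) - (B:ℂ))) - e * ((A:ℂ) + (B:ℂ))) := by ring
  rw [h5, norm_neg, h1, h2] at h3
  have h4 : (1:ℝ) ≤ ‖((A:ℂ) - (B:ℂ)) - e * ((A:ℂ) + (B:ℂ))‖ := by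
    linarith
  nlinarith [norm_nonneg (((A:ℂ) - (B:ℂ)) - e * ((A:ℂ) + (B:ℂ)))]


lemma ne_one_of_mem_unitDisk (w : ℂ) (hw : w ∈ unitDisk) : w - 1 ≠ 0 := by
  intro h0
  have h1 : w = 1 := by
    have := sub_eq_zero.mp h0
    exact this
  have : ‖w‖ < 1 := hw
  rw [h1] at this
  simp at this

lemma re_quot_nonpos (w : ℂ) (hw : w ∈ unitDisk) : ((w+1)/(w-1)).re ≤ 0 := by
  have h1 : Complex.normSq w < 1 := by
    have h2 : ‖w‖ < 1 := hw
    have h3 : Complex.normSq w = ‖w‖ ^ 2 := (Complex.normSq_eq_norm_sq w)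
    nlinarith [norm_nonneg w]
  rw [Complex.div_re]
  have hd : 0 ≤ Complex.normSq (w-1) := Complex.normSq_nonneg _
  have hnum : (w+1).re * (w-1).re + (w+1).im * (w-1).im = Complex.normSq w - 1 := by
    simp only [Complex.add_re, Complex.add_im, Complex.sub_re, Complex.sub_im,
      Complex.one_re, Complex.one_im, Complex.normSq_apply]
    ring
  rw [← add_div, hnum]
  apply div_nonpos_of_nonpos_of_nonneg <;> linarith

lemma famFun_mem (M t : ℝ) (hM : 0 ≤ M) (ht : 0 ≤ t) :
    (fun z : ↥unitDisk => famFun M t z.1) ∈ boundedAnalytic := by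
  rw [mem_bA_iff]
  constructor
  · refine ⟨famFun M t, ?_, fun _ => rfl⟩
    have hq : DifferentiableOn ℂ (fun w : ℂ => (t:ℂ) * (w+1)/(w-1)) unitDisk := by
      apply DifferentiableOn.div
      · exact ((differentiable_id.add_const 1).const_mul _).differentiableOn
      · exact (differentiable_id.sub_const 1).differentiableOn
      · exact ne_one_of_mem_unitDisk
    exact (hq.cexp).const_mul _
  · refine ⟨M, fun z => ?_⟩
    unfold famFun
    rw [norm_mul, Complex.norm_real, Real.norm_eq_abs, _root_.abs_of_nonneg hM, Complex.norm_exp]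
    have hre : ((t:ℂ) * (z.1+1)/(z.1-1)).re ≤ 0 := by
      rw [mul_div_assoc]
      have h1 : ((t:ℂ) * ((z.1+1)/(z.1-1))).re = t * ((z.1+1)/(z.1-1)).re := by
        simp [Complex.mul_re]
      rw [h1]
      have h2 := re_quot_nonpos z.1 z.2
      nlinarith [h2, ht]
    have hexp : Real.exp (((t:ℂ) * (z.1+1)/(z.1-1)).re) ≤ 1 := by
      rw [← Real.exp_zero]
      exact Real.exp_le_exp.mpr hre
    nlinarith

end NoPolish

open Topology in

theorem abstract_no_polish {X : Type} [CommRing X] (τ : TopologicalSpace X)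
    (hp : @PolishSpace X τ)
    (hadd : @Continuous (X × X) X (@instTopologicalSpaceProd _ _ τ τ) τ (fun p => p.1 + p.2))
    (hmul : @Continuous (X × X) X (@instTopologicalSpaceProd _ _ τ τ) τ (fun p => p.1 * p.2))
    (C : ℕ → Set X)
    (hC : ∀ n, ∃ T : Set X, T.Countable ∧ C n = ⋂ u ∈ T, {f | IsUnit (f - u)})
    (hcover : ∀ f, ∃ n, f ∈ C n)
    (hfam : ∀ (n : ℕ) (D : Set X), D.Countable →
      (∀ f, ∃ d ∈ D, ∃ s₁ ∈ C n, ∃ s₂ ∈ C n, f - d = s₁ - s₂) → False) : False := by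
  letI := τ
  haveI := hp
  haveI : T2Space X := inferInstance
  haveI : ContinuousAdd X := ⟨hadd⟩
  haveI : ContinuousMul X := ⟨hmul⟩
  haveI : ContinuousNeg X := ⟨by
    have h : Continuous fun f : X => (-1 : X) * f :=
      hmul.comp (continuous_const.prodMk continuous_id)
    simpa [neg_one_mul] using h⟩
  haveI : IsTopologicalAddGroup X := { }
  letI := TopologicalSpace.upgradeIsCompletelyMetrizable X
  borelize X
  -- units form a Borel set
  have hUnits : MeasurableSet {f : X | IsUnit f} := by
    have hclosed : IsClosed {p : X × X | p.1 * p.2 = 1} := isClosed_eq hmul continuous_const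
    have himg : {f : X | IsUnit f} = Prod.fst '' {p : X × X | p.1 * p.2 = 1} := by
      ext f
      constructor
      · rintro ⟨u, rfl⟩
        exact ⟨((u : X), ((u⁻¹ : Xˣ) : X)), by simp, rfl⟩
      · rintro ⟨⟨a, b⟩, hab, rfl⟩
        exact IsUnit.of_mul_eq_one _ hab
    rw [himg]
    exact hclosed.measurableSet_image_of_continuousOn_injOn continuous_fst.continuousOn
      (fun p hp' q hq' h => by
        have h2 : p.2 = q.2 := by
          have hp'' : p.1 * p.2 = 1 := hp'
          have hq'' : q.1 * q.2 = 1 := hq'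
          have : p.2 * (q.1 * q.2) = p.2 := by rw [hq'']; ring
          calc p.2 = p.2 * (q.1 * q.2) := this.symm
            _ = (p.1 * p.2) * q.2 := by rw [← h]; ring
            _ = q.2 := by rw [hp'']; ring
        exact Prod.ext h h2)
  -- each C n is Borel
  have hCB : ∀ n, MeasurableSet (C n) := by
    intro n
    obtain ⟨T, hTc, hTe⟩ := hC n
    rw [hTe]
    refine MeasurableSet.biInter hTc (fun u _ => ?_)
    have : {f : X | IsUnit (f - u)} = (fun f : X => f - u) ⁻¹' {f | IsUnit f} := rfl
    rw [this]
    exact (continuous_id.sub continuous_const).measurable hUnits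
  -- some C N is nonmeager
  obtain ⟨N, hN⟩ : ∃ N, ¬ IsMeagre (C N) := by
    by_contra h
    push_neg at h
    have h1 : IsMeagre (⋃ n, C n) := isMeagre_iUnion h
    have h2 : (⋃ n, C n) = Set.univ := by
      ext f; simp only [Set.mem_iUnion, Set.mem_univ, iff_true]; exact hcover f
    rw [h2] at h1
    have h3 : Dense ((Set.univ : Set X)ᶜ) := dense_of_mem_residual h1
    obtain ⟨x, hx⟩ := h3.nonempty
    simp at hx
  -- Pettis-type argument
  set S := C N with hS
  obtain ⟨U, hUopen, hSU⟩ := ((hCB N).baireMeasurableSet).residualEq_isOpen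
  have hE : {x : X | (x ∈ S) = (x ∈ U)} ∈ residual X := hSU
  have hUS : IsMeagre (U \ S) := by
    rw [IsMeagre]
    refine Filter.mem_of_superset hE ?_
    intro x hx
    simp only [Set.mem_setOf_eq] at hx
    simp only [Set.mem_compl_iff, Set.mem_diff, not_and, not_not]
    intro hxU
    rw [hx]; exact hxU
  have hUne : U.Nonempty := by
    rcases Set.eq_empty_or_nonempty U with h | h
    · exfalso
      apply hN
      rw [IsMeagre]
      refine Filter.mem_of_superset hE ?_
      intro x hx
      simp only [Set.mem_setOf_eq] at hx
      simp only [Set.mem_compl_iff, hS]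
      intro hxS
      have : x ∈ U := by rw [← hx]; exact hxS
      rw [h] at this; exact this
    · exact h
  -- every element of U - U is a difference of two elements of S
  have hclaim : ∀ g : X, (∃ u₁ ∈ U, ∃ u₂ ∈ U, g = u₁ - u₂) →
      ∃ s₁ ∈ S, ∃ s₂ ∈ S, g = s₁ - s₂ := by
    rintro g ⟨u₁, hu₁, u₂, hu₂, rfl⟩
    have hhomeo : Continuous fun x : X => x - (u₁ - u₂) := continuous_id.sub continuous_const
    have hopenmap : IsOpenMap fun x : X => x - (u₁ - u₂) := by
      have : (fun x : X => x - (u₁ - u₂)) = ⇑(Homeomorph.addRight (-(u₁ - u₂))) := by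
        ext x; simp [sub_eq_add_neg]
      rw [this]
      exact (Homeomorph.addRight (-(u₁ - u₂))).isOpenMap
    have hM₂ : IsMeagre ((fun x : X => x - (u₁ - u₂)) ⁻¹' (U \ S)) :=
      hUS.preimage_of_isOpenMap hhomeo hopenmap
    set W := U ∩ ((fun x : X => x - (u₁ - u₂)) ⁻¹' U) with hW
    have hWopen : IsOpen W := hUopen.inter (hUopen.preimage hhomeo)
    have hWne : W.Nonempty := ⟨u₁, hu₁, by simp only [Set.mem_preimage]; convert hu₂ using 2; ring⟩
    have hWnm : ¬ IsMeagre W := by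
      intro hm
      have hd : Dense Wᶜ := dense_of_mem_residual hm
      obtain ⟨x, hx1, hx2⟩ := hd.exists_mem_open hWopen hWne
      exact hx1 hx2
    have key : (W \ ((U \ S) ∪ (fun x : X => x - (u₁ - u₂)) ⁻¹' (U \ S))).Nonempty := by
      rcases Set.eq_empty_or_nonempty (W \ ((U \ S) ∪ (fun x : X => x - (u₁ - u₂)) ⁻¹' (U \ S))) with h | h
      · exfalso
        apply hWnm
        have hsub : W ⊆ (U \ S) ∪ (fun x : X => x - (u₁ - u₂)) ⁻¹' (U \ S) := by
          intro x hx
          by_contra hc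
          have : x ∈ W \ ((U \ S) ∪ (fun x : X => x - (u₁ - u₂)) ⁻¹' (U \ S)) := ⟨hx, hc⟩
          rw [h] at this
          exact this
        have hun : IsMeagre ((U \ S) ∪ (fun x : X => x - (u₁ - u₂)) ⁻¹' (U \ S)) := by
          rw [IsMeagre, Set.compl_union]
          exact Filter.inter_mem hUS hM₂
        exact hun.mono hsub
      · exact h
    obtain ⟨x, ⟨hxU, hxU'⟩, hxM⟩ := key
    simp only [Set.mem_union, not_or] at hxM
    obtain ⟨hx1, hx2⟩ := hxM
    have hxS : x ∈ S := by
      by_contra hc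
      exact hx1 ⟨hxU, hc⟩
    have hxS' : x - (u₁ - u₂) ∈ S := by
      by_contra hc
      exact hx2 ⟨hxU', hc⟩
    exact ⟨x, hxS, x - (u₁ - u₂), hxS', by ring⟩
  -- separability gives a countable net
  obtain ⟨D, hDc, hDd⟩ := TopologicalSpace.exists_countable_dense X
  refine hfam N D hDc (fun f => ?_)
  obtain ⟨u₀, hu₀⟩ := hUne
  have hopen2 : IsOpen ((fun x : X => x + (f - u₀)) '' U) :=
    ((Homeomorph.addRight (f - u₀)).isOpenMap) U hUopen
  have hne2 : ((fun x : X => x + (f - u₀)) '' U).Nonempty := ⟨u₀ + (f - u₀), ⟨u₀, hu₀, rfl⟩⟩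
  obtain ⟨d, hdD, hdW⟩ := hDd.exists_mem_open hopen2 hne2
  obtain ⟨u₂, hu₂, hdu⟩ := hdW
  refine ⟨d, hdD, ?_⟩
  have : f - d = u₀ - u₂ := by rw [← hdu]; ring
  obtain ⟨s₁, hs₁, s₂, hs₂, he⟩ := hclaim (f - d) ⟨u₀, hu₀, u₂, hu₂, this⟩
  exact ⟨s₁, hs₁, s₂, hs₂, he⟩




/-- there is no Polish topology on the ring of bounded analytic functions on
the open unit disk making addition and multiplication continuous. -/
theorem stmt4 (τ : TopologicalSpace ↥boundedAnalytic)
    (hp : @PolishSpace ↥boundedAnalytic τ)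
    (hadd : @Continuous (↥boundedAnalytic × ↥boundedAnalytic) ↥boundedAnalytic
      (@instTopologicalSpaceProd _ _ τ τ) τ (fun p => p.1 + p.2))
    (hmul : @Continuous (↥boundedAnalytic × ↥boundedAnalytic) ↥boundedAnalytic
      (@instTopologicalSpaceProd _ _ τ τ) τ (fun p => p.1 * p.2)) :
    False := by
  classical
  apply abstract_no_polish τ hp hadd hmul
    (C := fun n => {f : ↥boundedAnalytic | ∀ q : ℚ × ℚ,
      (n:ℝ) < ‖NoPolish.ratC q‖ → IsUnit (f - NoPolish.cst (NoPolish.ratC q))})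
  · -- hC : intersection form
    intro n
    refine ⟨(fun q : ℚ × ℚ => NoPolish.cst (NoPolish.ratC q)) ''
      {q | (n:ℝ) < ‖NoPolish.ratC q‖}, (Set.to_countable _).image _, ?_⟩
    ext f
    simp only [Set.mem_iInter, Set.mem_image, Set.mem_setOf_eq]
    constructor
    · rintro hf u ⟨q, hq, rfl⟩
      exact hf q hq
    · intro hf q hq
      exact hf _ ⟨q, hq, rfl⟩
  · -- cover
    intro f
    exact NoPolish.cover f
  · -- family contradiction
    intro n D hD hnet
    set M : ℝ := 9*(n+1) with hMdef
    have hM : 0 ≤ M := by positivity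
    set F : ℝ → ↥boundedAnalytic := fun t =>
      ⟨fun z : ↥unitDisk => NoPolish.famFun M (Real.exp t) z.1,
        NoPolish.famFun_mem M _ hM (Real.exp_pos t).le⟩ with hF
    choose φ hφD s1 hs1 s2 hs2 heq using fun t : ℝ => hnet (F t)
    -- key asymmetric claim
    have key : ∀ t s : ℝ, Real.exp t < Real.exp s → φ t ≠ φ s := by
      intro t s hts hphi
      obtain ⟨z₁, z₂, hsep⟩ := NoPolish.fam_sep M (Real.exp t) (Real.exp s) hM
        (Real.exp_pos t) hts
      have hval : ∀ (u : ℝ) (z : ↥unitDisk),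
          ((F u : ↥boundedAnalytic) : ↥unitDisk → ℂ) z
            - ((φ u : ↥boundedAnalytic) : ↥unitDisk → ℂ) z
          = ((s1 u : ↥boundedAnalytic) : ↥unitDisk → ℂ) z
            - ((s2 u : ↥boundedAnalytic) : ↥unitDisk → ℂ) z := by
        intro u z
        have h1 := congrFun (congrArg Subtype.val (heq u)) z
        rw [NoPolish.val_sub, NoPolish.val_sub] at h1
        exact h1
      -- diameters of the s functions
      have hdiam : ∀ u : ℝ, ∀ g : ↥boundedAnalytic,
          (∀ q : ℚ × ℚ, (n:ℝ) < ‖NoPolish.ratC q‖ →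
            IsUnit (g - NoPolish.cst (NoPolish.ratC q))) →
          ‖(g : ↥unitDisk → ℂ) z₁ - (g : ↥unitDisk → ℂ) z₂‖ ≤ 2*n := by
        intro u g hg
        exact NoPolish.diam_le n g hg z₁ z₂
      have hd1t := NoPolish.diam_le n (s1 t) (hs1 t) z₁ z₂
      have hd2t := NoPolish.diam_le n (s2 t) (hs2 t) z₁ z₂
      have hd1s := NoPolish.diam_le n (s1 s) (hs1 s) z₁ z₂
      have hd2s := NoPolish.diam_le n (s2 s) (hs2 s) z₁ z₂
      -- the separation quantity
      set Ft1 := ((F t : ↥boundedAnalytic) : ↥unitDisk → ℂ) z₁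
      set Ft2 := ((F t : ↥boundedAnalytic) : ↥unitDisk → ℂ) z₂
      set Fs1 := ((F s : ↥boundedAnalytic) : ↥unitDisk → ℂ) z₁
      set Fs2 := ((F s : ↥boundedAnalytic) : ↥unitDisk → ℂ) z₂
      have hFt1 : Ft1 = NoPolish.famFun M (Real.exp t) z₁.1 := rfl
      have hFt2 : Ft2 = NoPolish.famFun M (Real.exp t) z₂.1 := rfl
      have hFs1 : Fs1 = NoPolish.famFun M (Real.exp s) z₁.1 := rfl
      have hFs2 : Fs2 = NoPolish.famFun M (Real.exp s) z₂.1 := rfl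
      have hsep' : M ≤ ‖(Ft1 - Ft2) - (Fs1 - Fs2)‖ := by
        have hre : (Ft1 - Ft2) - (Fs1 - Fs2)
            = (NoPolish.famFun M (Real.exp t) z₁.1 - NoPolish.famFun M (Real.exp s) z₁.1)
              - (NoPolish.famFun M (Real.exp t) z₂.1 - NoPolish.famFun M (Real.exp s) z₂.1) := by
          rw [hFt1, hFt2, hFs1, hFs2]; ring
        rw [hre]
        exact hsep
      -- upper bound 8n
      have e1 := hval t z₁
      have e2 := hval t z₂
      have e3 := hval s z₁
      have e4 := hval s z₂
      rw [hphi] at e1 e2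
      have hcomb : (Ft1 - Ft2) - (Fs1 - Fs2)
          = (((s1 t : ↥boundedAnalytic) : ↥unitDisk → ℂ) z₁
              - ((s1 t : ↥boundedAnalytic) : ↥unitDisk → ℂ) z₂)
            - (((s2 t : ↥boundedAnalytic) : ↥unitDisk → ℂ) z₁
              - ((s2 t : ↥boundedAnalytic) : ↥unitDisk → ℂ) z₂)
            - ((((s1 s : ↥boundedAnalytic) : ↥unitDisk → ℂ) z₁
              - ((s1 s : ↥boundedAnalytic) : ↥unitDisk → ℂ) z₂)
            - (((s2 s : ↥boundedAnalytic) : ↥unitDisk → ℂ) z₁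
              - ((s2 s : ↥boundedAnalytic) : ↥unitDisk → ℂ) z₂)) := by
        linear_combination e1 - e2 - e3 + e4
      have hub : ‖(Ft1 - Ft2) - (Fs1 - Fs2)‖ ≤ 8*n := by
        rw [hcomb]
        calc ‖_‖ ≤ _ + _ := NoPolish.abs_sub_le' _ _
          _ ≤ (2*n + 2*n) + (2*n + 2*n) := by
              gcongr <;> first
                | exact (NoPolish.abs_sub_le' _ _).trans (by gcongr)
                | skip
          _ = 8*n := by ring
      have : (9:ℝ)*(n+1) ≤ 8*n := le_trans (by rw [← hMdef]; exact hsep') hub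
      have hn0 : (0:ℝ) ≤ n := Nat.cast_nonneg n
      linarith
    have hinj : Function.Injective φ := by
      intro t s h
      by_contra hts
      have hexp : Real.exp t ≠ Real.exp s := fun he => hts (Real.exp_injective he)
      rcases lt_or_gt_of_ne hexp with hlt | hgt
      · exact key t s hlt h
      · exact key s t hgt h.symm
    have hcnt : (Set.univ : Set ℝ).Countable := by
      refine Set.Countable.mono (fun t _ => ?_) (hD.preimage hinj)
      exact hφD t
    exact Cardinal.not_countable_real hcnt

end
end

section
/- Let Ω₁ ⊆ ℂ be nonempty open and connected, Ω₂ ⊆ ℂ open, and let γ : Ω₁ → Ω₂ be a conformal bijection. Then the map φ : 𝒜(Ω₁) → 𝒜(Ω₂) defined by φ(f) = (f ∘ γ⁻¹)/(γ⁻¹)′ is well-defined ((γ⁻¹)′ is zero-free on Ω₂) and is an isomorphism of Lie rings: it is an additive bijection with φ([f,g]) = [φ(f),φ(g)] for all f, g ∈ 𝒜(Ω₁). -/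
open Complex
open scoped Classical

noncomputable section

/-- Extension of a function on `Omega` to the whole plane by zero. -/
def extFun (Ω : Set ℂ) (f : Ω → ℂ) : ℂ → ℂ :=
  fun z => if h : z ∈ Ω then f ⟨z, h⟩ else 0

/-- The complex derivative of an analytic function on `Omega`. -/
def derivΩ (Ω : Set ℂ) (f : Ω → ℂ) : Ω → ℂ :=
  fun z => deriv (extFun Ω f) z

lemma derivΩ_mem {Ω : Set ℂ} (hΩ : IsOpen Ω) {f : Ω → ℂ}
    (hf : f ∈ analyticAlg Ω) : derivΩ Ω f ∈ analyticAlg Ω := by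
  obtain ⟨F, hF, hFf⟩ := hf
  refine ⟨deriv F, ((hF.analyticOnNhd hΩ).deriv).differentiableOn, fun z => ?_⟩
  have hev : extFun Ω f =ᶠ[nhds (z : ℂ)] F := by
    filter_upwards [hΩ.mem_nhds z.2] with w hw
    simp [extFun, hw, hFf ⟨w, hw⟩]
  exact (hev.deriv_eq).symm

/-- The Lie bracket `[f, g] = f * g' - f' * g` on `A(Omega)`. -/
def lieBkt {Ω : Set ℂ} (hΩ : IsOpen Ω) (f g : ↥(analyticAlg Ω)) : ↥(analyticAlg Ω) :=
  ⟨(f : Ω → ℂ) * derivΩ Ω g - derivΩ Ω f * (g : Ω → ℂ),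
   sub_mem (mul_mem f.2 (derivΩ_mem hΩ g.2)) (mul_mem (derivΩ_mem hΩ f.2) g.2)⟩

lemma derivΩ_eq_deriv {Ω : Set ℂ} (hΩ : IsOpen Ω) {f : Ω → ℂ} {F : ℂ → ℂ}
    (hFf : ∀ z : Ω, F z = f z) (z : Ω) : derivΩ Ω f z = deriv F z := by
  apply Filter.EventuallyEq.deriv_eq
  filter_upwards [hΩ.mem_nhds z.2] with w hw
  simp [extFun, hw, hFf ⟨w, hw⟩]

lemma mem_analyticAlg_iff {Ω : Set ℂ} {f : Ω → ℂ} :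
    f ∈ analyticAlg Ω ↔ ∃ F : ℂ → ℂ, DifferentiableOn ℂ F Ω ∧ ∀ z : Ω, F z = f z :=
  Iff.rfl

/-- a conformal bijection induces a Lie ring isomorphism
`f ↦ (f ∘ γ⁻¹)/(γ⁻¹)'`. -/
theorem stmt11 (Ω₁ Ω₂ : Set ℂ) (h₁ : IsOpen Ω₁) (hc₁ : IsConnected Ω₁) (h₂ : IsOpen Ω₂)
    (γ : Ω₁ → Ω₂) (δ : Ω₂ → Ω₁)
    (hγδ : Function.LeftInverse δ γ) (hδγ : Function.RightInverse δ γ)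
    (hγa : (fun z : Ω₁ => (γ z : ℂ)) ∈ analyticAlg Ω₁)
    (hδa : (fun w : Ω₂ => (δ w : ℂ)) ∈ analyticAlg Ω₂) :
    (∀ w : Ω₂, derivΩ Ω₂ (fun w : Ω₂ => (δ w : ℂ)) w ≠ 0) ∧
    ∃ φ : ↥(analyticAlg Ω₁) ≃+ ↥(analyticAlg Ω₂),
      (∀ (f : ↥(analyticAlg Ω₁)) (w : Ω₂),
        (φ f).1 w = f.1 (δ w) / derivΩ Ω₂ (fun w : Ω₂ => (δ w : ℂ)) w) ∧
      ∀ f g, φ (lieBkt h₁ f g) = lieBkt h₂ (φ f) (φ g) := by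
  obtain ⟨G, hG, hGδ⟩ := hδa
  obtain ⟨F, hF, hFγ⟩ := hγa
  have hGδ : ∀ z : Ω₂, G (z : ℂ) = ((δ z : Ω₁) : ℂ) := hGδ
  have hFγ : ∀ z : Ω₁, F (z : ℂ) = ((γ z : Ω₂) : ℂ) := hFγ
  have hGmem : ∀ w : Ω₂, G w ∈ Ω₁ := fun w => by rw [hGδ w]; exact (δ w).2
  have hFmem : ∀ z : Ω₁, F z ∈ Ω₂ := fun z => by rw [hFγ z]; exact (γ z).2
  have hGdiff : ∀ w : Ω₂, DifferentiableAt ℂ G w := fun w =>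
    hG.differentiableAt (h₂.mem_nhds w.2)
  have hFdiff : ∀ z : Ω₁, DifferentiableAt ℂ F z := fun z =>
    hF.differentiableAt (h₁.mem_nhds z.2)
  have hFG : ∀ x ∈ Ω₂, F (G x) = x := by
    intro x hx
    rw [hGδ ⟨x, hx⟩, hFγ (δ ⟨x, hx⟩), hδγ ⟨x, hx⟩]
  have hGF : ∀ x ∈ Ω₁, G (F x) = x := by
    intro x hx
    rw [hFγ ⟨x, hx⟩, hGδ (γ ⟨x, hx⟩), hγδ ⟨x, hx⟩]
  have hchain₂ : ∀ w : Ω₂, deriv F (G w) * deriv G w = 1 := by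
    intro w
    have hc : HasDerivAt (fun x => F (G x)) (deriv F (G w) * deriv G w) (w : ℂ) := by
      have := HasDerivAt.comp (w : ℂ)
        ((hF.differentiableAt (h₁.mem_nhds (hGmem w))).hasDerivAt)
        ((hGdiff w).hasDerivAt)
      exact this
    have hev : (id : ℂ → ℂ) =ᶠ[nhds (w : ℂ)] (fun x => F (G x)) := by
      filter_upwards [h₂.mem_nhds w.2] with x hx
      exact (hFG x hx).symm
    exact ((hc.congr_of_eventuallyEq hev).unique (hasDerivAt_id (w : ℂ))).symm ▸ rfl
  have hchain₁ : ∀ z : Ω₁, deriv G (F z) * deriv F z = 1 := by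
    intro z
    have hc : HasDerivAt (fun x => G (F x)) (deriv G (F z) * deriv F z) (z : ℂ) := by
      have := HasDerivAt.comp (z : ℂ)
        ((hG.differentiableAt (h₂.mem_nhds (hFmem z))).hasDerivAt)
        ((hFdiff z).hasDerivAt)
      exact this
    have hev : (id : ℂ → ℂ) =ᶠ[nhds (z : ℂ)] (fun x => G (F x)) := by
      filter_upwards [h₁.mem_nhds z.2] with x hx
      exact (hGF x hx).symm
    exact ((hc.congr_of_eventuallyEq hev).unique (hasDerivAt_id (z : ℂ))).symm ▸ rfl
  have hG0 : ∀ w : Ω₂, deriv G w ≠ 0 := fun w =>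
    right_ne_zero_of_mul_eq_one (hchain₂ w)
  have hF0 : ∀ z : Ω₁, deriv F z ≠ 0 := fun z =>
    right_ne_zero_of_mul_eq_one (hchain₁ z)
  have hDδ : ∀ w : Ω₂, derivΩ Ω₂ (fun w : Ω₂ => (δ w : ℂ)) w = deriv G w :=
    derivΩ_eq_deriv h₂ hGδ
  have hGa : AnalyticOnNhd ℂ G Ω₂ := hG.analyticOnNhd h₂
  have hFa : AnalyticOnNhd ℂ F Ω₁ := hF.analyticOnNhd h₁
  have hG2 : ∀ w : Ω₂, HasDerivAt (deriv G) (deriv (deriv G) w) (w : ℂ) := fun w =>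
    ((hGa.deriv (w : ℂ) w.2).differentiableAt).hasDerivAt
  have memΦ : ∀ f : ↥(analyticAlg Ω₁),
      (fun w : Ω₂ => f.1 (δ w) / deriv G w) ∈ analyticAlg Ω₂ := by
    intro f
    obtain ⟨Ff, hFf, hFfe⟩ := (mem_analyticAlg_iff).mp f.2
    refine ⟨fun x => Ff (G x) / deriv G x, ?_, ?_⟩
    · apply DifferentiableOn.div
      · exact hFf.comp hG (fun x hx => hGmem ⟨x, hx⟩)
      · exact fun x hx => ((hGa.deriv x hx).differentiableAt).differentiableWithinAt
      · exact fun x hx => hG0 ⟨x, hx⟩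
    · intro w
      simp only
      rw [hGδ w, hFfe (δ w)]
  have memΨ : ∀ g : ↥(analyticAlg Ω₂),
      (fun z : Ω₁ => g.1 (γ z) / deriv F z) ∈ analyticAlg Ω₁ := by
    intro g
    obtain ⟨Gg, hGg, hGge⟩ := (mem_analyticAlg_iff).mp g.2
    refine ⟨fun x => Gg (F x) / deriv F x, ?_, ?_⟩
    · apply DifferentiableOn.div
      · exact hGg.comp hF (fun x hx => hFmem ⟨x, hx⟩)
      · exact fun x hx => ((hFa.deriv x hx).differentiableAt).differentiableWithinAt
      · exact fun x hx => hF0 ⟨x, hx⟩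
    · intro z
      simp only
      rw [hFγ z, hGge (γ z)]
  set Φfun : ↥(analyticAlg Ω₁) → ↥(analyticAlg Ω₂) :=
    fun f => ⟨fun w => f.1 (δ w) / deriv G w, memΦ f⟩ with hΦdef
  set Ψfun : ↥(analyticAlg Ω₂) → ↥(analyticAlg Ω₁) :=
    fun g => ⟨fun z => g.1 (γ z) / deriv F z, memΨ g⟩ with hΨdef
  have hleft : ∀ f, Ψfun (Φfun f) = f := by
    intro f
    apply Subtype.ext
    funext z
    show (Φfun f).1 (γ z) / deriv F z = f.1 z
    show f.1 (δ (γ z)) / deriv G ((γ z : Ω₂) : ℂ) / deriv F z = f.1 z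
    rw [hγδ z, ← hFγ z, div_div, hchain₁ z, div_one]
  have hright : ∀ g, Φfun (Ψfun g) = g := by
    intro g
    apply Subtype.ext
    funext w
    show (Ψfun g).1 (δ w) / deriv G w = g.1 w
    show g.1 (γ (δ w)) / deriv F ((δ w : Ω₁) : ℂ) / deriv G w = g.1 w
    rw [hδγ w, ← hGδ w, div_div, hchain₂ w, div_one]
  have hadd : ∀ f g, Φfun (f + g) = Φfun f + Φfun g := by
    intro f g
    apply Subtype.ext
    funext w
    show (f + g).1 (δ w) / deriv G w = (Φfun f).1 w + (Φfun g).1 w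
    show (f.1 + g.1) (δ w) / deriv G w = f.1 (δ w) / deriv G w + g.1 (δ w) / deriv G w
    simp [add_div]
  have hderivΦ : ∀ (f : ↥(analyticAlg Ω₁)) (Ff : ℂ → ℂ),
      DifferentiableOn ℂ Ff Ω₁ → (∀ z : Ω₁, Ff z = f.1 z) → ∀ w : Ω₂,
      derivΩ Ω₂ (Φfun f).1 w =
        (deriv Ff (G w) * deriv G w * deriv G w - Ff (G w) * deriv (deriv G) w)
          / (deriv G w) ^ 2 := by
    intro f Ff hFf hFfe w
    have hext : ∀ x : Ω₂, Ff (G x) / deriv G x = (Φfun f).1 x := by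
      intro x
      show _ = f.1 (δ x) / deriv G x
      rw [hGδ x, hFfe (δ x)]
    rw [derivΩ_eq_deriv (F := fun x => Ff (G x) / deriv G x) h₂ hext w]
    have h1 : HasDerivAt (fun x => Ff (G x)) (deriv Ff (G w) * deriv G w) (w : ℂ) := by
      have := HasDerivAt.comp (w : ℂ)
        ((hFf.differentiableAt (h₁.mem_nhds (hGmem w))).hasDerivAt)
        ((hGdiff w).hasDerivAt)
      exact this
    exact (h1.div (hG2 w) (hG0 w)).deriv
  refine ⟨fun w => by rw [hDδ w]; exact hG0 w, ⟨⟨Φfun, Ψfun, hleft, hright⟩, hadd⟩, ?_, ?_⟩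
  · intro f w
    show f.1 (δ w) / deriv G w = f.1 (δ w) / derivΩ Ω₂ (fun w : Ω₂ => (δ w : ℂ)) w
    rw [hDδ w]
  · intro f g
    obtain ⟨Ff, hFf, hFfe⟩ := (mem_analyticAlg_iff).mp f.2
    obtain ⟨Fg, hFg, hFge⟩ := (mem_analyticAlg_iff).mp g.2
    apply Subtype.ext
    funext w
    show (lieBkt h₁ f g).1 (δ w) / deriv G w = (lieBkt h₂ (Φfun f) (Φfun g)).1 w
    have hdf : derivΩ Ω₁ f.1 (δ w) = deriv Ff (G w) := by
      rw [derivΩ_eq_deriv h₁ hFfe (δ w), ← hGδ w]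
    have hdg : derivΩ Ω₁ g.1 (δ w) = deriv Fg (G w) := by
      rw [derivΩ_eq_deriv h₁ hFge (δ w), ← hGδ w]
    have hvf : f.1 (δ w) = Ff (G w) := by rw [hGδ w, hFfe (δ w)]
    have hvg : g.1 (δ w) = Fg (G w) := by rw [hGδ w, hFge (δ w)]
    have hΦf : (Φfun f).1 w = Ff (G w) / deriv G w := by
      show f.1 (δ w) / deriv G w = _
      rw [hvf]
    have hΦg : (Φfun g).1 w = Fg (G w) / deriv G w := by
      show g.1 (δ w) / deriv G w = _
      rw [hvg]
    have hL : (lieBkt h₁ f g).1 (δ w) =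
        Ff (G w) * deriv Fg (G w) - deriv Ff (G w) * Fg (G w) := by
      show f.1 (δ w) * derivΩ Ω₁ g.1 (δ w) - derivΩ Ω₁ f.1 (δ w) * g.1 (δ w) = _
      rw [hvf, hvg, hdf, hdg]
    have hR : (lieBkt h₂ (Φfun f) (Φfun g)).1 w =
        (Φfun f).1 w * derivΩ Ω₂ (Φfun g).1 w - derivΩ Ω₂ (Φfun f).1 w * (Φfun g).1 w := rfl
    rw [hL, hR, hΦf, hΦg, hderivΦ f Ff hFf hFfe w, hderivΦ g Fg hFg hFge w]
    have hc := hG0 w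
    field_simp
    ring

end
end

section
/- Let Ω₁, Ω₂ ⊆ ℂ be nonempty open sets and let φ : 𝒜(Ω₁) → 𝒜(Ω₂) be an isomorphism of Lie rings. Then the function φ(1) (the image of the constant function 1) is zero-free on Ω₂. -/
open Complex
open scoped Classical

set_option synthInstance.maxHeartbeats 1000000
set_option maxHeartbeats 1600000

noncomputable section

section Aux

open Filter Topology

variable {Ω : Set ℂ}

lemma extFun_apply (f : Ω → ℂ) (z : Ω) : extFun Ω f z = f z := by
  simp [extFun]

lemma extFun_eqOn (hΩ : IsOpen Ω) {f : Ω → ℂ} {F : ℂ → ℂ} (hF : ∀ z : Ω, F z = f z)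
    {w : ℂ} (hw : w ∈ Ω) : extFun Ω f =ᶠ[𝓝 w] F := by
  filter_upwards [hΩ.mem_nhds hw] with z hz
  rw [extFun, dif_pos hz, ← hF ⟨z, hz⟩]

lemma derivΩ_eq (hΩ : IsOpen Ω) {f : Ω → ℂ} {F : ℂ → ℂ} (hF : ∀ z : Ω, F z = f z) (z : Ω) :
    derivΩ Ω f z = deriv F z := (extFun_eqOn hΩ hF z.2).deriv_eq

lemma extFun_analyticAt (hΩ : IsOpen Ω) {f : Ω → ℂ} (hf : f ∈ analyticAlg Ω) {w : ℂ}
    (hw : w ∈ Ω) : AnalyticAt ℂ (extFun Ω f) w := by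
  obtain ⟨F, hF, hFf⟩ := hf
  exact ((hF.analyticOnNhd hΩ) w hw).congr (extFun_eqOn hΩ hFf hw).symm

lemma derivΩ_one (hΩ : IsOpen Ω) (z : Ω) :
    derivΩ Ω ((1 : ↥(analyticAlg Ω)) : Ω → ℂ) z = 0 := by
  have hF : ∀ z : Ω, (fun _ : ℂ => (1:ℂ)) z = ((1 : ↥(analyticAlg Ω)) : Ω → ℂ) z :=
    fun z => by simp
  rw [derivΩ_eq hΩ (f := ((1 : ↥(analyticAlg Ω)) : Ω → ℂ)) (F := fun _ : ℂ => (1:ℂ)) hF z]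
  simp

lemma lieBkt_apply (hΩ : IsOpen Ω) (f g : ↥(analyticAlg Ω)) (z : Ω) :
    ((lieBkt hΩ f g : ↥(analyticAlg Ω)) : Ω → ℂ) z
      = (f : Ω → ℂ) z * derivΩ Ω (g : Ω → ℂ) z - derivΩ Ω (f : Ω → ℂ) z * (g : Ω → ℂ) z := rfl

def expFn (Ω : Set ℂ) (n : ℤ) : Ω → ℂ := fun z => Complex.exp (n * z)

lemma expFn_mem (hΩ : IsOpen Ω) (n : ℤ) : expFn Ω n ∈ analyticAlg Ω :=
  ⟨fun z => Complex.exp (n * z),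
   (Complex.differentiable_exp.comp (differentiable_id.const_mul (n:ℂ))).differentiableOn,
   fun _ => rfl⟩

lemma hasDerivAt_expFn (n : ℤ) (z : ℂ) :
    HasDerivAt (fun w : ℂ => Complex.exp (n * w)) ((n : ℂ) * Complex.exp (n * z)) z := by
  have h := (Complex.hasDerivAt_exp ((n:ℂ) * z)).comp z ((hasDerivAt_id z).const_mul (n:ℂ))
  simp only [Function.comp_def, mul_one] at h
  simpa [mul_comm] using h

def eFun (hΩ : IsOpen Ω) (n : ℤ) : ↥(analyticAlg Ω) := ⟨expFn Ω n, expFn_mem hΩ n⟩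

lemma derivΩ_expFn (hΩ : IsOpen Ω) (n : ℤ) (z : Ω) :
    derivΩ Ω (expFn Ω n) z = (n:ℂ) * Complex.exp (n * z) := by
  rw [derivΩ_eq hΩ (f := expFn Ω n) (F := fun w => Complex.exp ((n:ℂ) * w)) (fun _ => rfl) z]
  exact (hasDerivAt_expFn n z).deriv

lemma bkt_one_exp (hΩ : IsOpen Ω) (n : ℤ) :
    lieBkt hΩ 1 (eFun hΩ n) = n • eFun hΩ n := by
  apply Subtype.ext; funext z
  rw [show ((lieBkt hΩ 1 (eFun hΩ n) : ↥(analyticAlg Ω)) : Ω → ℂ) z = _ from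
    lieBkt_apply hΩ 1 (eFun hΩ n) z]
  rw [derivΩ_one hΩ z]
  rw [show ((eFun hΩ n : ↥(analyticAlg Ω)) : Ω → ℂ) = expFn Ω n from rfl]
  rw [derivΩ_expFn hΩ n z]
  simp [eFun, expFn, zsmul_eq_mul]

lemma bkt_exp_neg (hΩ : IsOpen Ω) (n : ℤ) :
    lieBkt hΩ (eFun hΩ n) (eFun hΩ (-n)) = (-2*n) • (1 : ↥(analyticAlg Ω)) := by
  apply Subtype.ext; funext z
  rw [show ((lieBkt hΩ (eFun hΩ n) (eFun hΩ (-n)) : ↥(analyticAlg Ω)) : Ω → ℂ) z = _ from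
    lieBkt_apply hΩ _ _ z]
  rw [show ((eFun hΩ n : ↥(analyticAlg Ω)) : Ω → ℂ) = expFn Ω n from rfl,
      show ((eFun hΩ (-n) : ↥(analyticAlg Ω)) : Ω → ℂ) = expFn Ω (-n) from rfl]
  rw [derivΩ_expFn hΩ n z, derivΩ_expFn hΩ (-n) z]
  have hmul : Complex.exp ((n:ℂ) * z) * Complex.exp (((-n : ℤ):ℂ) * z) = 1 := by
    rw [← Complex.exp_add, show ((n:ℂ) * z + ((-n : ℤ):ℂ) * z) = 0 by push_cast; ring,
        Complex.exp_zero]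
  have hcoe : (((-2*n : ℤ) • (1 : ↥(analyticAlg Ω)) : ↥(analyticAlg Ω)) : Ω → ℂ) z
      = ((-2*n : ℤ) : ℂ) := by
    rw [show (((-2*n : ℤ) • (1 : ↥(analyticAlg Ω)) : ↥(analyticAlg Ω)) : Ω → ℂ) z
      = (-2*n : ℤ) • (((1 : ↥(analyticAlg Ω)) : Ω → ℂ) z) from rfl]
    simp
  rw [hcoe, expFn, expFn]
  push_cast at hmul ⊢
  linear_combination (-2 * (n:ℂ)) * hmul

lemma pow_pred_mul (j : ℕ) (t : ℂ) : (j:ℂ) * t^(j-1) * t = j * t^j := by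
  cases j with
  | zero => simp
  | succ i => rw [Nat.succ_sub_one, pow_succ]; ring

lemma local_eigen {U G : ℂ → ℂ} {w₀ : ℂ} {n : ℂ}
    (hUan : AnalyticAt ℂ U w₀) (hGan : AnalyticAt ℂ G w₀)
    (hU0 : U w₀ = 0) (hUne : ¬ ∀ᶠ z in 𝓝 w₀, U z = 0) (hGne : ¬ ∀ᶠ z in 𝓝 w₀, G z = 0)
    (hn : n ≠ 0)
    (heq : ∀ᶠ z in 𝓝 w₀, U z * deriv G z - deriv U z * G z = n * G z) :
    ∃ m : ℕ, m ≠ 1 ∧ n = ((m : ℂ) - 1) * deriv U w₀ := by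
  have hUo : analyticOrderAt U w₀ ≠ ⊤ := fun hh => hUne (analyticOrderAt_eq_top.mp hh)
  obtain ⟨k, hk⟩ : ∃ k : ℕ, analyticOrderAt U w₀ = (k : ℕ∞) := ⟨(analyticOrderAt U w₀).toNat, (ENat.coe_toNat hUo).symm⟩
  obtain ⟨v, hvan, hv0, hUeq0⟩ := hUan.analyticOrderAt_eq_natCast.mp hk
  have hUeq : U =ᶠ[𝓝 w₀] fun z => (z - w₀)^k * v z := hUeq0.mono fun z hz => by
    simpa [smul_eq_mul] using hz
  have hGo : analyticOrderAt G w₀ ≠ ⊤ := fun hh => hGne (analyticOrderAt_eq_top.mp hh)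
  obtain ⟨m, hm⟩ : ∃ m : ℕ, analyticOrderAt G w₀ = (m : ℕ∞) := ⟨(analyticOrderAt G w₀).toNat, (ENat.coe_toNat hGo).symm⟩
  obtain ⟨h, hhan, hh0, hGeq0⟩ := hGan.analyticOrderAt_eq_natCast.mp hm
  have hGeq : G =ᶠ[𝓝 w₀] fun z => (z - w₀)^m * h z := hGeq0.mono fun z hz => by
    simpa [smul_eq_mul] using hz
  have hk1 : 1 ≤ k := by
    rcases Nat.eq_zero_or_pos k with h0 | h1
    · exfalso
      apply hv0
      have hself := hUeq.self_of_nhds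
      rw [h0] at hself
      simpa [hU0] using hself.symm
    · exact h1
  have hvd : ∀ᶠ z in 𝓝 w₀, DifferentiableAt ℂ v z :=
    hvan.eventually_analyticAt.mono fun z hz => hz.differentiableAt
  have hhd : ∀ᶠ z in 𝓝 w₀, DifferentiableAt ℂ h z :=
    hhan.eventually_analyticAt.mono fun z hz => hz.differentiableAt
  have hU' : ∀ᶠ z in 𝓝 w₀, (z - w₀) * deriv U z
      = (k:ℂ) * (z - w₀)^k * v z + (z - w₀)^(k+1) * deriv v z := by
    filter_upwards [hUeq.deriv, hvd] with z hz hdz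
    have hpw : HasDerivAt (fun y : ℂ => (y - w₀)^k) ((k:ℂ) * (z - w₀)^(k-1) * 1) z :=
      ((hasDerivAt_id z).sub_const w₀).pow k
    have hprod := (hpw.fun_mul hdz.hasDerivAt).deriv
    rw [hz, hprod]
    linear_combination v z * pow_pred_mul k (z - w₀)
  have hG' : ∀ᶠ z in 𝓝 w₀, (z - w₀) * deriv G z
      = (m:ℂ) * (z - w₀)^m * h z + (z - w₀)^(m+1) * deriv h z := by
    filter_upwards [hGeq.deriv, hhd] with z hz hdz
    have hpw : HasDerivAt (fun y : ℂ => (y - w₀)^m) ((m:ℂ) * (z - w₀)^(m-1) * 1) z :=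
      ((hasDerivAt_id z).sub_const w₀).pow m
    have hprod := (hpw.fun_mul hdz.hasDerivAt).deriv
    rw [hz, hprod]
    linear_combination h z * pow_pred_mul m (z - w₀)
  have hkey : ∀ᶠ z in 𝓝[≠] w₀,
      (z - w₀)^(k-1) * (((m:ℂ) - (k:ℂ)) * v z * h z
        + (z - w₀) * (v z * deriv h z - deriv v z * h z)) = n * h z := by
    filter_upwards [(heq.and ((hUeq.and (hGeq.and (hU'.and hG'))))).filter_mono
      nhdsWithin_le_nhds, self_mem_nhdsWithin] with z hz hne
    obtain ⟨he, hU_, hG_, hU'_, hG'_⟩ := hz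
    have ht : (z - w₀) ≠ 0 := sub_ne_zero.mpr hne
    apply mul_left_cancel₀ (pow_ne_zero (m+1) ht)
    have hpow : (z - w₀)^(m+1) * (z - w₀)^(k-1) = (z - w₀)^k * (z - w₀)^m := by
      rw [← pow_add, ← pow_add]; congr 1; omega
    rw [← mul_assoc, hpow]
    have base : U z * ((z - w₀) * deriv G z) - ((z - w₀) * deriv U z) * G z
        = (z - w₀) * (n * G z) := by linear_combination (z - w₀) * he
    rw [hU'_, hG'_, hU_, hG_] at base
    linear_combination base
  obtain ⟨s, hs, hsan⟩ := hvan.exists_mem_nhds_analyticOnNhd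
  have hdv : ContinuousAt (deriv v) w₀ := ((hsan.deriv) w₀ (mem_of_mem_nhds hs)).continuousAt
  obtain ⟨s', hs', hsan'⟩ := hhan.exists_mem_nhds_analyticOnNhd
  have hdh : ContinuousAt (deriv h) w₀ := ((hsan'.deriv) w₀ (mem_of_mem_nhds hs')).continuousAt
  have hvc := hvan.continuousAt
  have hhc := hhan.continuousAt
  have hWc : ContinuousAt (fun z => (z - w₀)^(k-1) * (((m:ℂ) - (k:ℂ)) * v z * h z
        + (z - w₀) * (v z * deriv h z - deriv v z * h z))) w₀ :=
    (((continuousAt_id.sub continuousAt_const).pow (k-1)).mul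
      (((continuousAt_const.mul hvc).mul hhc).add
        ((continuousAt_id.sub continuousAt_const).mul ((hvc.mul hdh).sub (hdv.mul hhc)))))
  have ht1 := hWc.tendsto.mono_left (nhdsWithin_le_nhds : 𝓝[≠] w₀ ≤ 𝓝 w₀)
  have ht2 : Filter.Tendsto (fun z => n * h z) (𝓝[≠] w₀) (𝓝 (n * h w₀)) :=
    (continuousAt_const.mul hhc).tendsto.mono_left nhdsWithin_le_nhds
  have hlim := tendsto_nhds_unique (ht1.congr' hkey) ht2
  rw [sub_self] at hlim
  rcases eq_or_lt_of_le hk1 with hk1' | hk2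
  · have hderivU : deriv U w₀ = v w₀ := by
      have h1 : deriv U w₀ = deriv (fun z => (z - w₀)^k * v z) w₀ := hUeq.deriv_eq
      have hpw : HasDerivAt (fun y : ℂ => (y - w₀)^k) ((k:ℂ) * (w₀ - w₀)^(k-1) * 1) w₀ :=
        ((hasDerivAt_id w₀).sub_const w₀).pow k
      have hprod := (hpw.fun_mul hvan.differentiableAt.hasDerivAt).deriv
      rw [h1, hprod, ← hk1']
      simp
    rw [← hk1'] at hlim
    norm_num at hlim
    refine ⟨m, ?_, ?_⟩
    · rintro rfl
      norm_num at hlim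
      rcases hlim with h' | h'
      · exact hn h'.symm
      · exact hh0 h'
    · rw [hderivU]
      rcases hlim with h' | h'
      · exact h'.symm
      · exact absurd h' hh0
  · have hz : (0:ℂ)^(k-1) = 0 := zero_pow (by omega)
    rw [hz, zero_mul] at hlim
    exact absurd hlim.symm (mul_ne_zero hn hh0)

/-- Piecewise function: `c` on the clopen-in-`Ω` piece `V`, `0` elsewhere. -/
def pieceFn (Ω V : Set ℂ) (c : ℂ → ℂ) : Ω → ℂ := fun z => if (z:ℂ) ∈ V then c z else 0

lemma pieceFn_ext_eq {V : Set ℂ} {c : ℂ → ℂ} (hV : IsOpen V) (hVΩ : V ⊆ Ω) {w : ℂ}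
    (hw : w ∈ V) : extFun Ω (pieceFn Ω V c) =ᶠ[𝓝 w] c := by
  filter_upwards [hV.mem_nhds hw] with y hy
  rw [extFun, dif_pos (hVΩ hy)]
  simp [pieceFn, hy]

lemma pieceFn_ext_eq0 {V : Set ℂ} {c : ℂ → ℂ} (hVC : IsOpen (Ω \ V)) {w : ℂ}
    (hw : w ∈ Ω \ V) : extFun Ω (pieceFn Ω V c) =ᶠ[𝓝 w] fun _ => 0 := by
  filter_upwards [hVC.mem_nhds hw] with y hy
  rw [extFun, dif_pos hy.1]
  simp [pieceFn, hy.2]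

lemma pieceFn_mem (hΩ : IsOpen Ω) {V : Set ℂ} {c : ℂ → ℂ} (hV : IsOpen V)
    (hVC : IsOpen (Ω \ V)) (hVΩ : V ⊆ Ω) (hc : Differentiable ℂ c) :
    pieceFn Ω V c ∈ analyticAlg Ω := by
  refine ⟨extFun Ω (pieceFn Ω V c), ?_, fun z => extFun_apply _ _⟩
  intro z hz
  by_cases hzV : z ∈ V
  · exact (((pieceFn_ext_eq hV hVΩ hzV).differentiableAt_iff).mpr
      (hc z)).differentiableWithinAt
  · exact (((pieceFn_ext_eq0 hVC ⟨hz, hzV⟩).differentiableAt_iff).mpr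
      (differentiableAt_const 0)).differentiableWithinAt

lemma pieceFn_derivΩ_mem {V : Set ℂ} {c : ℂ → ℂ} (hV : IsOpen V) (hVΩ : V ⊆ Ω)
    {z : Ω} (hz : (z:ℂ) ∈ V) : derivΩ Ω (pieceFn Ω V c) z = deriv c z :=
  (pieceFn_ext_eq hV hVΩ hz).deriv_eq

lemma pieceFn_derivΩ_nmem {V : Set ℂ} {c : ℂ → ℂ} (hVC : IsOpen (Ω \ V))
    {z : Ω} (hz : (z:ℂ) ∉ V) : derivΩ Ω (pieceFn Ω V c) z = 0 := by
  rw [show derivΩ Ω (pieceFn Ω V c) z = deriv (extFun Ω (pieceFn Ω V c)) z from rfl,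
    (pieceFn_ext_eq0 hVC ⟨z.2, hz⟩).deriv_eq]
  simp

end Aux

/-- for a Lie ring isomorphism `phi : A(Omega1) -> A(Omega2)`, the function
`phi 1` is zero-free. -/
theorem stmt13 (Ω₁ Ω₂ : Set ℂ) (h₁ : IsOpen Ω₁) (hne₁ : Ω₁.Nonempty)
    (h₂ : IsOpen Ω₂) (hne₂ : Ω₂.Nonempty)
    (φ : ↥(analyticAlg Ω₁) ≃+ ↥(analyticAlg Ω₂))
    (hφ : ∀ f g, φ (lieBkt h₁ f g) = lieBkt h₂ (φ f) (φ g)) :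
    ∀ w : Ω₂, (φ 1).1 w ≠ 0 := by
  intro w₀ hzero
  classical
  set u : ↥(analyticAlg Ω₂) := φ 1 with hudef
  set Uf : ℂ → ℂ := extFun Ω₂ (u : Ω₂ → ℂ) with hUfdef
  have hUan : AnalyticAt ℂ Uf (↑w₀) := extFun_analyticAt h₂ u.2 w₀.2
  have hU0 : Uf ↑w₀ = 0 := by
    rw [hUfdef, extFun_apply]
    exact hzero
  -- transported bracket relations
  have hA1 : ∀ n : ℤ, lieBkt h₂ u (φ (eFun h₁ n)) = n • (φ (eFun h₁ n)) := by
    intro n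
    have hgen := hφ 1 (eFun h₁ n)
    rw [bkt_one_exp h₁ n, map_zsmul] at hgen
    exact hgen.symm
  have hB1 : ∀ n : ℤ, lieBkt h₂ (φ (eFun h₁ n)) (φ (eFun h₁ (-n))) = (-2*n) • u := by
    intro n
    have hgen := hφ (eFun h₁ n) (eFun h₁ (-n))
    rw [bkt_exp_neg h₁ n, map_zsmul] at hgen
    exact hgen.symm
  -- pointwise versions near w₀
  have hRA : ∀ n : ℤ, ∀ᶠ z in nhds (↑w₀ : ℂ),
      Uf z * deriv (extFun Ω₂ ((φ (eFun h₁ n)) : Ω₂ → ℂ)) z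
        - deriv Uf z * extFun Ω₂ ((φ (eFun h₁ n)) : Ω₂ → ℂ) z
        = ((n:ℤ):ℂ) * extFun Ω₂ ((φ (eFun h₁ n)) : Ω₂ → ℂ) z := by
    intro n
    filter_upwards [h₂.mem_nhds w₀.2] with z hz
    have hz' := congrFun (congrArg Subtype.val (hA1 n)) ⟨z, hz⟩
    rw [lieBkt_apply] at hz'
    have hval : ((n • (φ (eFun h₁ n)) : ↥(analyticAlg Ω₂)) : Ω₂ → ℂ) ⟨z, hz⟩
        = ((n:ℤ):ℂ) * ((φ (eFun h₁ n) : ↥(analyticAlg Ω₂)) : Ω₂ → ℂ) ⟨z, hz⟩ := by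
      rw [show ((n • (φ (eFun h₁ n)) : ↥(analyticAlg Ω₂)) : Ω₂ → ℂ) ⟨z, hz⟩
        = n • (((φ (eFun h₁ n)) : Ω₂ → ℂ) ⟨z, hz⟩) from rfl, zsmul_eq_mul]
    rw [hval] at hz'
    rw [show Uf z = (u : Ω₂ → ℂ) ⟨z, hz⟩ from extFun_apply _ ⟨z, hz⟩,
      show extFun Ω₂ ((φ (eFun h₁ n)) : Ω₂ → ℂ) z = ((φ (eFun h₁ n)) : Ω₂ → ℂ) ⟨z, hz⟩ from
        extFun_apply _ ⟨z, hz⟩]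
    exact hz'
  have hRB : ∀ n : ℤ, ∀ᶠ z in nhds (↑w₀ : ℂ),
      extFun Ω₂ ((φ (eFun h₁ n)) : Ω₂ → ℂ) z * deriv (extFun Ω₂ ((φ (eFun h₁ (-n))) : Ω₂ → ℂ)) z
        - deriv (extFun Ω₂ ((φ (eFun h₁ n)) : Ω₂ → ℂ)) z * extFun Ω₂ ((φ (eFun h₁ (-n))) : Ω₂ → ℂ) z
        = ((-2*n:ℤ):ℂ) * Uf z := by
    intro n
    filter_upwards [h₂.mem_nhds w₀.2] with z hz
    have hz' := congrFun (congrArg Subtype.val (hB1 n)) ⟨z, hz⟩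
    rw [lieBkt_apply] at hz'
    have hval : (((-2*n:ℤ) • u : ↥(analyticAlg Ω₂)) : Ω₂ → ℂ) ⟨z, hz⟩
        = ((-2*n:ℤ):ℂ) * ((u : ↥(analyticAlg Ω₂)) : Ω₂ → ℂ) ⟨z, hz⟩ := by
      rw [show (((-2*n:ℤ) • u : ↥(analyticAlg Ω₂)) : Ω₂ → ℂ) ⟨z, hz⟩
        = (-2*n:ℤ) • (((u : ↥(analyticAlg Ω₂)) : Ω₂ → ℂ) ⟨z, hz⟩) from rfl, zsmul_eq_mul]
    rw [hval] at hz'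
    rw [show Uf z = ((u : ↥(analyticAlg Ω₂)) : Ω₂ → ℂ) ⟨z, hz⟩ from extFun_apply _ ⟨z, hz⟩,
      show extFun Ω₂ ((φ (eFun h₁ n)) : Ω₂ → ℂ) z = ((φ (eFun h₁ n)) : Ω₂ → ℂ) ⟨z, hz⟩ from
        extFun_apply _ ⟨z, hz⟩,
      show extFun Ω₂ ((φ (eFun h₁ (-n))) : Ω₂ → ℂ) z
        = ((φ (eFun h₁ (-n))) : Ω₂ → ℂ) ⟨z, hz⟩ from extFun_apply _ ⟨z, hz⟩]
    exact hz'
  by_cases hA : ∀ᶠ z in nhds (↑w₀ : ℂ), Uf z = 0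
  · -- Case A : u vanishes identically near w₀; use the centralizer argument.
    set V : Set ℂ := {z : ℂ | z ∈ Ω₂ ∧ ∀ᶠ y in nhds z, Uf y = 0} with hVdef
    have hVΩ : V ⊆ Ω₂ := fun z hz => hz.1
    have hw₀V : (↑w₀ : ℂ) ∈ V := ⟨w₀.2, hA⟩
    have hVopen : IsOpen V := by
      rw [isOpen_iff_mem_nhds]
      rintro z ⟨hzΩ, hzev⟩
      have hmem : ∀ᶠ y in nhds z, y ∈ Ω₂ := h₂.mem_nhds hzΩ
      have hev2 : ∀ᶠ y in nhds z, ∀ᶠ x in nhds y, Uf x = 0 := hzev.eventually_nhds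
      exact (hmem.and hev2).mono fun y hy => hy
    have hVCopen : IsOpen (Ω₂ \ V) := by
      rw [isOpen_iff_mem_nhds]
      rintro z ⟨hzΩ, hzV⟩
      have hzan : AnalyticAt ℂ Uf z := extFun_analyticAt h₂ u.2 hzΩ
      rcases hzan.eventually_eq_zero_or_eventually_ne_zero with hcase | hcase
      · exact absurd ⟨hzΩ, hcase⟩ hzV
      · rw [eventually_nhdsWithin_iff] at hcase
        obtain ⟨N, hN, hNopen, hzN⟩ := eventually_nhds_iff.mp hcase
        have hNmem : N ∩ Ω₂ ∈ nhds z := (hNopen.inter h₂).mem_nhds ⟨hzN, hzΩ⟩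
        apply Filter.mem_of_superset hNmem
        rintro w ⟨hwN, hwΩ⟩
        refine ⟨hwΩ, ?_⟩
        rintro ⟨-, hwev⟩
        have hwz : w ≠ z := by
          rintro rfl
          exact hzV ⟨hzΩ, hwev⟩
        have h3 : ∀ᶠ y in nhds w, y ∈ N := hNopen.mem_nhds hwN
        have h4 : ∀ᶠ y in nhds w, y ≠ z := eventually_ne_nhds hwz
        obtain ⟨y, hy1, hy2, hy3⟩ := (hwev.and (h3.and h4)).exists
        exact hN y hy2 (by simpa using hy3) hy1
    -- the two piecewise functions
    have hp : pieceFn Ω₂ V (fun _ => 1) ∈ analyticAlg Ω₂ :=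
      pieceFn_mem h₂ hVopen hVCopen hVΩ (differentiable_const 1)
    have hq : pieceFn Ω₂ V id ∈ analyticAlg Ω₂ :=
      pieceFn_mem h₂ hVopen hVCopen hVΩ differentiable_id
    -- bracket of u with each piecewise function is zero
    have hUval : ∀ z : Ω₂, (↑z : ℂ) ∈ V → (u : Ω₂ → ℂ) z = 0 := by
      intro z hz
      have := hz.2.self_of_nhds
      rwa [hUfdef, extFun_apply] at this
    have hUder : ∀ z : Ω₂, (↑z : ℂ) ∈ V → derivΩ Ω₂ (u : Ω₂ → ℂ) z = 0 := by
      intro z hz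
      have hev : extFun Ω₂ (u : Ω₂ → ℂ) =ᶠ[nhds (↑z : ℂ)] fun _ => 0 := hz.2
      rw [show derivΩ Ω₂ (u : Ω₂ → ℂ) z = deriv (extFun Ω₂ (u : Ω₂ → ℂ)) z from rfl,
        hev.deriv_eq]
      simp
    have hbp : lieBkt h₂ u ⟨pieceFn Ω₂ V (fun _ => 1), hp⟩ = 0 := by
      apply Subtype.ext; funext z
      rw [show ((lieBkt h₂ u ⟨pieceFn Ω₂ V (fun _ => 1), hp⟩ : ↥(analyticAlg Ω₂)) : Ω₂ → ℂ) z
        = _ from lieBkt_apply h₂ _ _ z]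
      rw [show (((0 : ↥(analyticAlg Ω₂))) : Ω₂ → ℂ) z = 0 from rfl]
      by_cases hzV : (↑z : ℂ) ∈ V
      · rw [hUval z hzV, hUder z hzV]
        ring
      · rw [pieceFn_derivΩ_nmem hVCopen hzV,
          show ((⟨pieceFn Ω₂ V (fun _ => 1), hp⟩ : ↥(analyticAlg Ω₂)) : Ω₂ → ℂ) z
            = pieceFn Ω₂ V (fun _ => 1) z from rfl]
        rw [show pieceFn Ω₂ V (fun _ => 1) z = 0 from if_neg hzV]
        ring
    have hbq : lieBkt h₂ u ⟨pieceFn Ω₂ V id, hq⟩ = 0 := by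
      apply Subtype.ext; funext z
      rw [show ((lieBkt h₂ u ⟨pieceFn Ω₂ V id, hq⟩ : ↥(analyticAlg Ω₂)) : Ω₂ → ℂ) z
        = _ from lieBkt_apply h₂ _ _ z]
      rw [show (((0 : ↥(analyticAlg Ω₂))) : Ω₂ → ℂ) z = 0 from rfl]
      by_cases hzV : (↑z : ℂ) ∈ V
      · rw [hUval z hzV, hUder z hzV]
        ring
      · rw [pieceFn_derivΩ_nmem hVCopen hzV,
          show ((⟨pieceFn Ω₂ V id, hq⟩ : ↥(analyticAlg Ω₂)) : Ω₂ → ℂ) z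
            = pieceFn Ω₂ V id z from rfl]
        rw [show pieceFn Ω₂ V id z = 0 from if_neg hzV]
        ring
    -- pull back and use that the centralizer of 1 is abelian
    set f1 := φ.symm ⟨pieceFn Ω₂ V (fun _ => 1), hp⟩ with hf1def
    set f2 := φ.symm ⟨pieceFn Ω₂ V id, hq⟩ with hf2def
    have hbf1 : lieBkt h₁ 1 f1 = 0 := by
      apply φ.injective
      rw [hφ 1 f1, map_zero, φ.apply_symm_apply]
      exact hbp
    have hbf2 : lieBkt h₁ 1 f2 = 0 := by
      apply φ.injective
      rw [hφ 1 f2, map_zero, φ.apply_symm_apply]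
      exact hbq
    have hd1 : ∀ z : Ω₁, derivΩ Ω₁ (f1 : Ω₁ → ℂ) z = 0 := by
      intro z
      have hz' := congrFun (congrArg Subtype.val hbf1) z
      rw [lieBkt_apply, derivΩ_one h₁ z] at hz'
      simpa using hz'
    have hd2 : ∀ z : Ω₁, derivΩ Ω₁ (f2 : Ω₁ → ℂ) z = 0 := by
      intro z
      have hz' := congrFun (congrArg Subtype.val hbf2) z
      rw [lieBkt_apply, derivΩ_one h₁ z] at hz'
      simpa using hz'
    have hbf : lieBkt h₁ f1 f2 = 0 := by
      apply Subtype.ext; funext z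
      rw [show ((lieBkt h₁ f1 f2 : ↥(analyticAlg Ω₁)) : Ω₁ → ℂ) z = _ from lieBkt_apply h₁ _ _ z,
        hd1 z, hd2 z]
      rw [show (((0 : ↥(analyticAlg Ω₁))) : Ω₁ → ℂ) z = 0 from rfl]
      ring
    have hcontr := hφ f1 f2
    rw [hbf, map_zero, φ.apply_symm_apply, φ.apply_symm_apply] at hcontr
    have hval := congrFun (congrArg Subtype.val hcontr.symm) w₀
    rw [lieBkt_apply] at hval
    rw [show (((0 : ↥(analyticAlg Ω₂))) : Ω₂ → ℂ) w₀ = 0 from rfl,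
      pieceFn_derivΩ_mem (c := id) hVopen hVΩ hw₀V,
      pieceFn_derivΩ_mem (c := fun _ => (1:ℂ)) hVopen hVΩ hw₀V,
      show ((⟨pieceFn Ω₂ V (fun _ => 1), hp⟩ : ↥(analyticAlg Ω₂)) : Ω₂ → ℂ) w₀
        = pieceFn Ω₂ V (fun _ => 1) w₀ from rfl,
      show pieceFn Ω₂ V (fun _ => 1) w₀ = 1 from if_pos hw₀V] at hval
    simp at hval
  · -- Case B : u has a finite-order zero at w₀
    have hGan : ∀ n : ℤ, AnalyticAt ℂ (extFun Ω₂ ((φ (eFun h₁ n)) : Ω₂ → ℂ)) (↑w₀ : ℂ) :=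
      fun n => extFun_analyticAt h₂ (φ (eFun h₁ n)).2 w₀.2
    have hGne : ∀ n : ℤ, n ≠ 0 →
        ¬ ∀ᶠ z in nhds (↑w₀ : ℂ), extFun Ω₂ ((φ (eFun h₁ n)) : Ω₂ → ℂ) z = 0 := by
      intro n hn hev
      apply hA
      have hev' : ∀ᶠ z in nhds (↑w₀ : ℂ), deriv (extFun Ω₂ ((φ (eFun h₁ n)) : Ω₂ → ℂ)) z = 0 := by
        have hee : extFun Ω₂ ((φ (eFun h₁ n)) : Ω₂ → ℂ) =ᶠ[nhds (↑w₀ : ℂ)] fun _ => 0 := hev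
        filter_upwards [hee.deriv] with z hz
        rw [hz]
        simp
      filter_upwards [hRB n, hev, hev'] with z hb hz hz'
      rw [hz, hz'] at hb
      have h0 : ((-2*n:ℤ):ℂ) * Uf z = 0 := by rw [← hb]; ring
      have hcoeff : ((-2*n:ℤ):ℂ) ≠ 0 := by
        simp only [ne_eq, Int.cast_eq_zero]
        omega
      exact (mul_eq_zero.mp h0).resolve_left hcoeff
    have key : ∀ n : ℤ, n ≠ 0 → ∃ m : ℕ, m ≠ 1 ∧ ((n:ℤ):ℂ) = ((m:ℂ) - 1) * deriv Uf ↑w₀ := by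
      intro n hn
      exact local_eigen hUan (hGan n) hU0 hA (hGne n hn)
        (by exact_mod_cast hn) (hRA n)
    obtain ⟨m1, hm1, e1⟩ := key 1 one_ne_zero
    obtain ⟨m1', hm1', e1'⟩ := key (-1) (by norm_num)
    obtain ⟨m2, hm2, e2⟩ := key 2 (by norm_num)
    obtain ⟨m2', hm2', e2'⟩ := key (-2) (by norm_num)
    set a := deriv Uf ↑w₀ with hadef
    push_cast at e1 e1' e2 e2'
    have ha : a ≠ 0 := by
      intro h0
      rw [h0, mul_zero] at e1
      norm_num at e1
    have hs1 : ((m1:ℂ) + (m1':ℂ) - 2) * a = 0 := by linear_combination -e1 - e1'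
    have hm1sum : m1 + m1' = 2 := by
      have hc := (mul_eq_zero.mp hs1).resolve_right ha
      have hc2 : ((m1 + m1' : ℕ) : ℂ) = ((2:ℕ):ℂ) := by push_cast; linear_combination hc
      exact_mod_cast hc2
    have hs2 : ((m2:ℂ) + (m2':ℂ) - 2) * a = 0 := by linear_combination -e2 - e2'
    have hm2sum : m2 + m2' = 2 := by
      have hc := (mul_eq_zero.mp hs2).resolve_right ha
      have hc2 : ((m2 + m2' : ℕ) : ℂ) = ((2:ℕ):ℂ) := by push_cast; linear_combination hc
      exact_mod_cast hc2
    have hsq1 : a^2 = 1 := by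
      have : m1 = 0 ∨ m1 = 2 := by omega
      rcases this with h0 | h0 <;> rw [h0] at e1 <;> push_cast at e1
      · have : a = -1 := by linear_combination e1
        rw [this]; ring
      · have : a = 1 := by linear_combination -e1
        rw [this]; ring
    have hsq2 : a^2 = 4 := by
      have : m2 = 0 ∨ m2 = 2 := by omega
      rcases this with h0 | h0 <;> rw [h0] at e2 <;> push_cast at e2
      · have : a = -2 := by linear_combination e2
        rw [this]; ring
      · have : a = 2 := by linear_combination -e2
        rw [this]; ring
    rw [hsq1] at hsq2
    norm_num at hsq2


end
end
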